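/- arXiv:1507.01247 — 3 statements merged into one kernel-verified Lean document; each statement's English description precedes it below -/
import Mathlib

section
/- Let E be a finite graph and let R be a unital commutative ring of characteristic 0. If paths α₁, …, αₙ ∈ E* satisfy Σᵢ αᵢαᵢ* = 1 in L_R(E), then αᵢ*αⱼ = 0 for all i ≠ j. -/
open MulOpposite

noncomputable section

/-- A directed graph: vertices, edges, source and range maps. -/
structure LGraph where
  V : Type
  Ed : Type
  src : Ed → V
  rng : Ed → V

namespace Leavitt

/-- Generators of the Leavitt path algebra: vertices, edges and ghost edges. -/
inductive Gen (G : LGraph) : Type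
  | vert : G.V → Gen G
  | edge : G.Ed → Gen G
  | ghost : G.Ed → Gen G

/-- The star operation on generators: fixes vertices, swaps edges and ghost edges. -/
def starGen {G : LGraph} : Gen G → Gen G
  | .vert v => .vert v
  | .edge e => .ghost e
  | .ghost e => .edge e

@[simp] lemma starGen_vert {G : LGraph} (v : G.V) : starGen (.vert v : Gen G) = .vert v := rfl
@[simp] lemma starGen_edge {G : LGraph} (e : G.Ed) : starGen (.edge e : Gen G) = .ghost e := rfl
@[simp] lemma starGen_ghost {G : LGraph} (e : G.Ed) : starGen (.ghost e : Gen G) = .edge e := rfl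

/-- Words in the generators. -/
abbrev Wd (G : LGraph) : Type := FreeMonoid (Gen G)

/-- The star of a word: reverse it and star each letter. -/
def wordStar {G : LGraph} (w : Wd G) : Wd G :=
  FreeMonoid.ofList (((FreeMonoid.toList w).map starGen).reverse)

/-- A vertex is a sink if it emits no edge. -/
def IsSink (G : LGraph) (v : G.V) : Prop := ∀ e : G.Ed, G.src e ≠ v

/-- The free `R`-algebra on the generators, realized as a monoid algebra on words. -/
abbrev MA (R : Type) [CommRing R] (G : LGraph) : Type := MonoidAlgebra R (Wd G)

/-- The generator `g` as an element of the free algebra. -/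
def gn (R : Type) [CommRing R] {G : LGraph} (g : Gen G) : MA R G :=
  MonoidAlgebra.single (FreeMonoid.of g) (1 : R)

/-- The defining relations of the Leavitt path algebra `L_R(E)`. -/
inductive LRel (R : Type) [CommRing R] (G : LGraph) : MA R G → MA R G → Prop
  | vert_vert {v w : G.V} (h : v ≠ w) : LRel R G (gn R (.vert v) * gn R (.vert w)) 0
  | vert_idem (v : G.V) : LRel R G (gn R (.vert v) * gn R (.vert v)) (gn R (.vert v))
  | ghost_edge {e f : G.Ed} (h : e ≠ f) : LRel R G (gn R (.ghost e) * gn R (.edge f)) 0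
  | ghost_edge_self (e : G.Ed) :
      LRel R G (gn R (.ghost e) * gn R (.edge e)) (gn R (.vert (G.rng e)))
  | src_mul_edge (e : G.Ed) :
      LRel R G (gn R (.vert (G.src e)) * gn R (.edge e)) (gn R (.edge e))
  | edge_mul_rng (e : G.Ed) :
      LRel R G (gn R (.edge e) * gn R (.vert (G.rng e))) (gn R (.edge e))
  | ghost_mul_src (e : G.Ed) :
      LRel R G (gn R (.ghost e) * gn R (.vert (G.src e))) (gn R (.ghost e))
  | rng_mul_ghost (e : G.Ed) :
      LRel R G (gn R (.vert (G.rng e)) * gn R (.ghost e)) (gn R (.ghost e))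
  | ck (v : G.V) (h : {e : G.Ed | G.src e = v}.Finite)
      (hne : {e : G.Ed | G.src e = v}.Nonempty) :
      LRel R G (gn R (.vert v)) (∑ e ∈ h.toFinset, gn R (.edge e) * gn R (.ghost e))
  | unit (h : (Set.univ : Set G.V).Finite) :
      LRel R G 1 (∑ v ∈ h.toFinset, gn R (.vert v))

/-- The Leavitt path algebra of the graph `G` with coefficients in `R`. -/
abbrev LPA (R : Type) [CommRing R] (G : LGraph) : Type := RingQuot (LRel R G)

/-- The quotient map onto the Leavitt path algebra. -/
def mk (R : Type) [CommRing R] (G : LGraph) : MA R G →+* LPA R G :=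
  RingQuot.mkRingHom (LRel R G)

variable (R : Type) [CommRing R] (G : LGraph)

/-- Auxiliary monoid homomorphism sending a word to the image in the opposite algebra of
its starred word. -/
def ghostMap : Wd G →* (LPA R G)ᵐᵒᵖ :=
  FreeMonoid.lift fun x => op (mk R G (gn R (starGen x)))

/-- The underlying ring homomorphism of the (conjugate-linear, with respect to `σ`)
involution, from the free algebra to the opposite of the Leavitt path algebra. -/
def starPre (σ : R →+* R) : MA R G →+* (LPA R G)ᵐᵒᵖ :=
  MonoidAlgebra.liftNCRingHom ((algebraMap R (LPA R G)ᵐᵒᵖ).comp σ) (ghostMap R G)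
    (fun x y => Algebra.commute_algebraMap_left (σ x) _)

lemma starPre_single (σ : R →+* R) (w : Wd G) (c : R) :
    starPre R G σ (MonoidAlgebra.single w c)
      = algebraMap R (LPA R G)ᵐᵒᵖ (σ c) * ghostMap R G w := by
  classical
  exact MonoidAlgebra.liftNC_single _ _ _ _

lemma starPre_gn (σ : R →+* R) (a : Gen G) :
    starPre R G σ (gn R a) = op (mk R G (gn R (starGen a))) := by
  rw [gn, starPre_single, map_one, map_one, one_mul]
  rfl

lemma starPre_gn_mul (σ : R →+* R) (a b : Gen G) :
    starPre R G σ (gn R a * gn R b)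
      = op (mk R G (gn R (starGen b) * gn R (starGen a))) := by
  rw [map_mul, starPre_gn, starPre_gn, ← op_mul, ← map_mul]

lemma starPre_rel (σ : R →+* R) :
    ∀ ⦃a b : MA R G⦄, LRel R G a b → starPre R G σ a = starPre R G σ b := by
  have key : ∀ {x y : MA R G}, LRel R G x y → mk R G x = mk R G y :=
    fun h => RingQuot.mkRingHom_rel h
  intro a b h
  cases h with
  | vert_vert h =>
      rw [starPre_gn_mul, map_zero, starGen_vert, starGen_vert,
        key (LRel.vert_vert (Ne.symm h)), map_zero, op_zero]
  | vert_idem v =>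
      rw [starPre_gn_mul, starPre_gn, starGen_vert, key (LRel.vert_idem v)]
  | ghost_edge h =>
      rw [starPre_gn_mul, map_zero, starGen_edge, starGen_ghost,
        key (LRel.ghost_edge (Ne.symm h)), map_zero, op_zero]
  | ghost_edge_self e =>
      rw [starPre_gn_mul, starPre_gn, starGen_edge, starGen_ghost, starGen_vert,
        key (LRel.ghost_edge_self e)]
  | src_mul_edge e =>
      rw [starPre_gn_mul, starPre_gn, starGen_edge, starGen_vert,
        key (LRel.ghost_mul_src e)]
  | edge_mul_rng e =>
      rw [starPre_gn_mul, starPre_gn, starGen_edge, starGen_vert,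
        key (LRel.rng_mul_ghost e)]
  | ghost_mul_src e =>
      rw [starPre_gn_mul, starPre_gn, starGen_ghost, starGen_vert,
        key (LRel.src_mul_edge e)]
  | rng_mul_ghost e =>
      rw [starPre_gn_mul, starPre_gn, starGen_ghost, starGen_vert,
        key (LRel.edge_mul_rng e)]
  | ck v hfin hne =>
      rw [starPre_gn, starGen_vert, map_sum]
      simp only [starPre_gn_mul, starGen_edge, starGen_ghost]
      rw [← Finset.op_sum, ← map_sum, key (LRel.ck v hfin hne)]
  | unit hfin =>
      rw [map_one, map_sum]
      simp only [starPre_gn, starGen_vert]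
      rw [← Finset.op_sum, ← map_sum, ← key (LRel.unit hfin), map_one, op_one]

/-- The involution `x ↦ x*` on the Leavitt path algebra, conjugate-linear with respect
to the coefficient conjugation `σ`. -/
def lstar (σ : R →+* R) : LPA R G → LPA R G :=
  fun x => unop ((RingQuot.lift ⟨starPre R G σ, starPre_rel R G σ⟩) x)

/-- `chainOK G v l` : the list of edges `l` is a path starting at the vertex `v`. -/
def chainOK (G : LGraph) : G.V → List G.Ed → Prop
  | _, [] => True
  | v, e :: l => G.src e = v ∧ chainOK G (G.rng e) l

/-- The end vertex of a list of edges starting at `v`. -/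
def pathEnd (G : LGraph) : G.V → List G.Ed → G.V
  | v, [] => v
  | _, e :: l => pathEnd G (G.rng e) l

/-- A finite path in `G`: a starting vertex together with a compatible (possibly empty)
list of edges.  Vertices are the paths of length `0`. -/
structure GPath (G : LGraph) where
  first : G.V
  edges : List G.Ed
  ok : chainOK G first edges

/-- The range (end vertex) of a path. -/
def GPath.last {G : LGraph} (p : GPath G) : G.V := pathEnd G p.first p.edges

/-- The length of a path. -/
def GPath.length {G : LGraph} (p : GPath G) : ℕ := p.edges.length

/-- The word in the generators associated to a path. -/
def GPath.word {G : LGraph} (p : GPath G) : Wd G :=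
  FreeMonoid.ofList (Gen.vert p.first :: p.edges.map Gen.edge)

/-- The element `α` of `L_R(E)` associated to a path `α`. -/
def pathElem {G : LGraph} (p : GPath G) : LPA R G :=
  mk R G (MonoidAlgebra.single p.word (1 : R))

/-- The element `α*` of `L_R(E)` associated to a path `α`. -/
def pathElemStar {G : LGraph} (p : GPath G) : LPA R G :=
  mk R G (MonoidAlgebra.single (wordStar p.word) (1 : R))

/-- The diagonal subalgebra: the `R`-linear span of the `αα*` for finite paths `α`. -/
def diagonal : Submodule R (LPA R G) :=
  Submodule.span R (Set.range fun p : GPath G => pathElem R p * pathElemStar R p)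

/-- The image of a vertex in the Leavitt path algebra. -/
def vertexElem (v : G.V) : LPA R G := mk R G (gn R (.vert v))

/-- The image of an edge in the Leavitt path algebra. -/
def edgeElem (e : G.Ed) : LPA R G := mk R G (gn R (.edge e))

/-- The image of a ghost edge (`e*`) in the Leavitt path algebra. -/
def ghostElem (e : G.Ed) : LPA R G := mk R G (gn R (.ghost e))

/-- A projection: a self-adjoint idempotent. -/
def IsProjection (σ : R →+* R) (p : LPA R G) : Prop :=
  p * p = p ∧ lstar R G σ p = p

/-- A unitary element. -/
def IsUnitary (σ : R →+* R) (u : LPA R G) : Prop :=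
  lstar R G σ u * u = 1 ∧ u * lstar R G σ u = 1

/-- The adjacency matrix of a graph. -/
noncomputable def adjMatrix (G : LGraph) : Matrix G.V G.V ℤ :=
  Matrix.of fun v w => (Nat.card {e : G.Ed // G.src e = v ∧ G.rng e = w} : ℤ)

/-- A graph is strongly connected if there is a path between any two vertices. -/
def StronglyConnected (G : LGraph) : Prop :=
  ∀ u w : G.V, ∃ p : GPath G, p.first = u ∧ p.last = w

/-- A graph is essential if it has no sinks and no sources. -/
def Essential (G : LGraph) : Prop :=
  (∀ v : G.V, ∃ e : G.Ed, G.src e = v) ∧ (∀ v : G.V, ∃ e : G.Ed, G.rng e = v)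

/-- Condition (L): every cycle has an exit. -/
def ConditionL (G : LGraph) : Prop :=
  ∀ p : GPath G, p.edges ≠ [] → p.last = p.first →
    ∃ (i : Fin p.edges.length) (f : G.Ed),
      G.src f = G.src (p.edges.get i) ∧ f ≠ p.edges.get i

/-- Complex conjugation on a subring of `ℂ` closed under conjugation. -/
def conjHom (R : Subring ℂ) (hR : ∀ z ∈ R, (starRingEnd ℂ) z ∈ R) : ↥R →+* ↥R where
  toFun z := ⟨(starRingEnd ℂ) (z : ℂ), hR (z : ℂ) z.2⟩
  map_one' := by ext; simp
  map_mul' x y := by ext; simp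
  map_zero' := by ext; simp
  map_add' x y := by ext; simp

/-- A subring of `ℂ` has an essentially unique partition of the unit if whenever
`∑ λᵢ λ̄ᵢ = 1` with all `λᵢ` in the subring, all but one of the `λᵢ` vanish. -/
def HasEUP (R : Subring ℂ) : Prop :=
  ∀ (n : ℕ) (lam : Fin n → ↥R),
    (∑ i, (lam i : ℂ) * (starRingEnd ℂ) (lam i : ℂ)) = 1 →
      ∃ j : Fin n, ∀ i : Fin n, i ≠ j → lam i = 0

/-- The graph `E₂`: one vertex and two loops (`false` ↦ `a`, `true` ↦ `b`). -/
def E2 : LGraph := ⟨PUnit, Bool, fun _ => PUnit.unit, fun _ => PUnit.unit⟩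

/-- The graph `E₂₋`, the Cuntz splice of `E₂`.  Vertices: `0 = u`, `1 = v₁`, `2 = v₂`.
Edges: `0,1 = f₁,f₂` (loops at `u`), `2 = d₁ : u → v₁`, `3 = d₂ : v₁ → u`,
`4 = e₁` (loop at `v₁`), `5 = e₂ : v₁ → v₂`, `6 = e₃ : v₂ → v₁`, `7 = e₄` (loop at `v₂`). -/
def E2m : LGraph := ⟨Fin 3, Fin 8, ![0, 0, 0, 1, 1, 1, 2, 2], ![0, 0, 1, 0, 1, 2, 1, 2]⟩

end Leavitt

end

noncomputable section Aux
open Leavitt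
open scoped Classical

variable {G : LGraph}

/-- Boundary path encoded as vertex/edge sequences with `Option` tail. -/
@[ext] structure BPt (G : LGraph) where
  vtx : ℕ → G.V
  ed : ℕ → Option G.Ed
  hsrc : ∀ n e, ed n = some e → G.src e = vtx n
  hrng : ∀ n e, ed n = some e → vtx (n+1) = G.rng e
  hsink : ∀ n, ed n = none → IsSink G (vtx n)

def BPt.shift (x : BPt G) : BPt G :=
  ⟨fun n => x.vtx (n+1), fun n => x.ed (n+1),
   fun n e h => x.hsrc (n+1) e h, fun n e h => x.hrng (n+1) e h,
   fun n h => x.hsink (n+1) h⟩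

@[simp] lemma BPt.shift_vtx (x : BPt G) (n : ℕ) : x.shift.vtx n = x.vtx (n+1) := rfl
@[simp] lemma BPt.shift_ed (x : BPt G) (n : ℕ) : x.shift.ed n = x.ed (n+1) := rfl

def BPt.cons (e : G.Ed) (x : BPt G) (h : G.rng e = x.vtx 0) : BPt G where
  vtx n := match n with | 0 => G.src e | (n+1) => x.vtx n
  ed n := match n with | 0 => some e | (n+1) => x.ed n
  hsrc n f hf := by
    match n with
    | 0 => simp only at hf; cases hf; rfl
    | (n+1) => exact x.hsrc n f hf
  hrng n f hf := by
    match n with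
    | 0 => simp only at hf; cases hf; exact h.symm
    | (n+1) => exact x.hrng n f hf
  hsink n hn := by
    match n with
    | 0 => simp at hn
    | (n+1) => exact x.hsink n hn

@[simp] lemma BPt.cons_vtx_zero (e : G.Ed) (x : BPt G) (h) :
    (BPt.cons e x h).vtx 0 = G.src e := rfl
@[simp] lemma BPt.cons_ed_zero (e : G.Ed) (x : BPt G) (h) :
    (BPt.cons e x h).ed 0 = some e := rfl

@[simp] lemma BPt.shift_cons (e : G.Ed) (x : BPt G) (h) :
    (BPt.cons e x h).shift = x := by
  ext n <;> rfl

lemma BPt.cons_shift (x : BPt G) (e : G.Ed) (h0 : x.ed 0 = some e) :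
    BPt.cons e x.shift (by simpa using (x.hrng 0 e h0).symm) = x := by
  ext n
  · match n with
    | 0 => exact x.hsrc 0 e h0
    | (n+1) => rfl
  · match n with
    | 0 => simp [h0]
    | (n+1) => rfl

lemma exists_src_of_not_sink {v : G.V} (h : ¬ IsSink G v) : ∃ e, G.src e = v := by
  unfold IsSink at h; push_neg at h; exact h

def nxt (v : G.V) (h : ¬ IsSink G v) : G.Ed := (exists_src_of_not_sink h).choose

lemma nxt_src (v : G.V) (h : ¬ IsSink G v) : G.src (nxt v h) = v :=
  (exists_src_of_not_sink h).choose_spec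

def walkV (w : G.V) : ℕ → G.V
  | 0 => w
  | (n+1) => if h : IsSink G (walkV w n) then walkV w n else G.rng (nxt _ h)

/-- The greedy boundary path starting at `w`. -/
def greedy (w : G.V) : BPt G where
  vtx := walkV w
  ed n := if h : IsSink G (walkV w n) then none else some (nxt _ h)
  hsrc n e he := by
    by_cases h : IsSink G (walkV w n)
    · simp [h] at he
    · rw [dif_neg h] at he; cases he; exact nxt_src _ h
  hrng n e he := by
    by_cases h : IsSink G (walkV w n)
    · simp [h] at he
    · rw [dif_neg h] at he; cases he
      show walkV w (n+1) = _
      rw [walkV, dif_neg h]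
  hsink n hn := by
    by_cases h : IsSink G (walkV w n)
    · exact h
    · rw [dif_neg h] at hn; simp at hn

@[simp] lemma greedy_vtx_zero (w : G.V) : (greedy w : BPt G).vtx 0 = w := rfl


section Rep

variable (R : Type) [CommRing R] (G : LGraph)

abbrev Mo : Type := (BPt G) →₀ R

/-- Partial action of each generator on boundary paths. -/
def pAct : Gen G → BPt G → Option (BPt G)
  | .vert v, x => if x.vtx 0 = v then some x else none
  | .edge e, x => if h : G.rng e = x.vtx 0 then some (BPt.cons e x h) else none
  | .ghost e, x => if x.ed 0 = some e then some x.shift else none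

def toEnd (f : BPt G → Option (BPt G)) : Module.End R (Mo R G) :=
  Finsupp.lsum R fun b => Option.elim (f b) 0 (fun b' => Finsupp.lsingle b')

lemma toEnd_single (f : BPt G → Option (BPt G)) (b : BPt G) (r : R) :
    toEnd R G f (Finsupp.single b r)
      = Option.elim (f b) 0 (fun b' => Finsupp.single b' r) := by
  rw [toEnd, Finsupp.lsum_single]
  cases f b <;> simp

def genE (g : Gen G) : Module.End R (Mo R G) := toEnd R G (pAct G g)

variable {G}

lemma genE_vert (v : G.V) (b : BPt G) (r : R) :
    genE R G (Gen.vert v) (Finsupp.single b r)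
      = if b.vtx 0 = v then Finsupp.single b r else 0 := by
  rw [genE, toEnd_single]
  by_cases h : b.vtx 0 = v <;> simp [pAct, h]

lemma genE_edge (e : G.Ed) (b : BPt G) (r : R) :
    genE R G (Gen.edge e) (Finsupp.single b r)
      = if h : G.rng e = b.vtx 0 then Finsupp.single (BPt.cons e b h) r else 0 := by
  rw [genE, toEnd_single]
  by_cases h : G.rng e = b.vtx 0 <;> simp [pAct, h]

lemma genE_ghost (e : G.Ed) (b : BPt G) (r : R) :
    genE R G (Gen.ghost e) (Finsupp.single b r)
      = if b.ed 0 = some e then Finsupp.single b.shift r else 0 := by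
  rw [genE, toEnd_single]
  by_cases h : b.ed 0 = some e <;> simp [pAct, h]

variable (G)

def wHom : Wd G →* Module.End R (Mo R G) := FreeMonoid.lift (genE R G)

def repA : MA R G →ₐ[R] Module.End R (Mo R G) := MonoidAlgebra.lift R _ (Wd G) (wHom R G)

lemma repA_single (w : Wd G) (c : R) :
    repA R G (MonoidAlgebra.single w c) = c • wHom R G w :=
  MonoidAlgebra.lift_single _ _ _

lemma repA_gn (g : Gen G) : repA R G (gn R g) = genE R G g := by
  have : gn R g = MonoidAlgebra.single (FreeMonoid.of g) (1 : R) := rfl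
  rw [this, repA_single, one_smul]
  rfl


lemma repA_rel : ∀ ⦃a b : MA R G⦄, LRel R G a b → repA R G a = repA R G b := by
  intro a b hrel
  cases hrel with
  | @vert_vert v w hvw =>
      rw [map_mul, repA_gn, repA_gn, map_zero]
      apply Finsupp.lhom_ext; intro b r
      by_cases hb : b.vtx 0 = w <;>
        simp [Module.End.mul_apply, genE_vert, hb, Ne.symm hvw]
  | vert_idem v =>
      simp only [map_mul, repA_gn]
      apply Finsupp.lhom_ext; intro b r
      by_cases hb : b.vtx 0 = v <;> simp [Module.End.mul_apply, genE_vert, hb]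
  | @ghost_edge e f hef =>
      rw [map_mul, repA_gn, repA_gn, map_zero]
      apply Finsupp.lhom_ext; intro b r
      by_cases hb : G.rng f = b.vtx 0 <;>
        simp [Module.End.mul_apply, genE_edge, genE_ghost, hb, Ne.symm hef]
  | ghost_edge_self e =>
      simp only [map_mul, repA_gn]
      apply Finsupp.lhom_ext; intro b r
      by_cases hb : G.rng e = b.vtx 0
      · rw [Module.End.mul_apply, genE_edge, dif_pos hb, genE_ghost, BPt.cons_ed_zero,
          if_pos rfl, BPt.shift_cons, genE_vert, if_pos hb.symm]
      · have hb' : ¬ (b.vtx 0 = G.rng e) := fun h => hb h.symm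
        simp [Module.End.mul_apply, genE_edge, genE_vert, hb, hb']
  | src_mul_edge e =>
      simp only [map_mul, repA_gn]
      apply Finsupp.lhom_ext; intro b r
      by_cases hb : G.rng e = b.vtx 0 <;>
        simp [Module.End.mul_apply, genE_edge, genE_vert, hb]
  | edge_mul_rng e =>
      simp only [map_mul, repA_gn]
      apply Finsupp.lhom_ext; intro b r
      by_cases hb : G.rng e = b.vtx 0
      · rw [Module.End.mul_apply, genE_vert, if_pos hb.symm, genE_edge]
      · have hb' : ¬ (b.vtx 0 = G.rng e) := fun h => hb h.symm
        simp [Module.End.mul_apply, genE_edge, genE_vert, hb, hb']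
  | ghost_mul_src e =>
      simp only [map_mul, repA_gn]
      apply Finsupp.lhom_ext; intro b r
      by_cases hbe : b.ed 0 = some e
      · have hv : b.vtx 0 = G.src e := (b.hsrc 0 e hbe).symm
        simp [Module.End.mul_apply, genE_ghost, genE_vert, hbe, hv]
      · by_cases hv : b.vtx 0 = G.src e <;>
          simp [Module.End.mul_apply, genE_ghost, genE_vert, hbe, hv]
  | rng_mul_ghost e =>
      simp only [map_mul, repA_gn]
      apply Finsupp.lhom_ext; intro b r
      by_cases hbe : b.ed 0 = some e
      · have hv : b.vtx 1 = G.rng e := b.hrng 0 e hbe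
        simp [Module.End.mul_apply, genE_ghost, genE_vert, hbe, hv]
      · simp [Module.End.mul_apply, genE_ghost, genE_vert, hbe]
  | @ck v hfin hne =>
      rw [repA_gn, map_sum]
      apply Finsupp.lhom_ext; intro b r
      have hterm : ∀ e : G.Ed,
          repA R G (gn R (Gen.edge e) * gn R (Gen.ghost e)) (Finsupp.single b r)
            = if b.ed 0 = some e then Finsupp.single b r else 0 := by
        intro e
        rw [map_mul, repA_gn, repA_gn, Module.End.mul_apply, genE_ghost]
        by_cases hbe : b.ed 0 = some e
        · have hv : G.rng e = b.shift.vtx 0 := (b.hrng 0 e hbe).symm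
          rw [if_pos hbe, genE_edge, dif_pos hv, if_pos hbe]
          exact congrArg (fun y => Finsupp.single y r) (BPt.cons_shift b e hbe)
        · simp [hbe]
      rw [LinearMap.sum_apply, Finset.sum_congr rfl (fun e _ => hterm e)]
      cases hb0 : b.ed 0 with
      | none =>
          rw [genE_vert, Finset.sum_eq_zero (fun e _ => by simp)]
          rw [if_neg]
          intro hbv
          obtain ⟨e, he⟩ := hne
          exact (b.hsink 0 hb0) e (by rw [he]; exact hbv.symm)
      | some f =>
          have hsf : G.src f = b.vtx 0 := b.hsrc 0 f hb0
          have hrw : ∀ e : G.Ed,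
              (if some f = some e then Finsupp.single b r else 0)
                = if e = f then Finsupp.single b r else 0 := fun e => by simp [eq_comm]
          rw [Finset.sum_congr rfl (fun e _ => hrw e), Finset.sum_ite_eq' hfin.toFinset f
            (fun _ => Finsupp.single b r), genE_vert]
          have hmem : f ∈ hfin.toFinset ↔ b.vtx 0 = v := by
            rw [Set.Finite.mem_toFinset]
            constructor
            · intro hh
              rw [← hsf]
              exact hh
            · intro hh
              show G.src f = v
              rw [hsf]
              exact hh
          by_cases hbv : b.vtx 0 = v
          · rw [if_pos hbv, if_pos (hmem.mpr hbv)]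
          · rw [if_neg hbv, if_neg (fun hh => hbv (hmem.mp hh))]
  | unit hfin =>
      rw [map_one, map_sum]
      apply Finsupp.lhom_ext; intro b r
      have : ∀ v : G.V, repA R G (gn R (Gen.vert v)) (Finsupp.single b r)
          = if b.vtx 0 = v then Finsupp.single b r else 0 := fun v => by
        rw [repA_gn, genE_vert]
      rw [LinearMap.sum_apply, Finset.sum_congr rfl (fun v _ => this v),
        Finset.sum_ite_eq hfin.toFinset (b.vtx 0) (fun _ => Finsupp.single b r),
        if_pos (by rw [Set.Finite.mem_toFinset]; trivial)]
      simp

/-- The representation of the Leavitt path algebra on boundary paths. -/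
def repQ : LPA R G →ₐ[R] Module.End R (Mo R G) :=
  RingQuot.liftAlgHom R ⟨repA R G, repA_rel R G⟩

lemma repQ_mk (a : MA R G) : repQ R G (mk R G a) = repA R G a := by
  have : mk R G a = RingQuot.mkAlgHom R (LRel R G) a := by
    rw [mk, ← RingQuot.mkAlgHom_coe R (LRel R G)]; rfl
  rw [this, repQ, RingQuot.liftAlgHom_mkAlgHom_apply]

end Rep


section Paths

variable (R : Type) [CommRing R] {G : LGraph}

def stripL : List G.Ed → BPt G → Option (BPt G)
  | [], x => some x
  | e :: l, x => if x.ed 0 = some e then stripL l x.shift else none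

def buildL : List G.Ed → BPt G → Option (BPt G)
  | [], x => some x
  | e :: l, x => (buildL l x).bind fun y =>
      if h : G.rng e = y.vtx 0 then some (BPt.cons e y h) else none

lemma wHom_edges (l : List G.Ed) (b : BPt G) (r : R) :
    wHom R G (FreeMonoid.ofList (l.map Gen.edge)) (Finsupp.single b r)
      = Option.elim (buildL l b) 0 (fun y => Finsupp.single y r) := by
  induction l with
  | nil => simp [buildL]
  | cons e l ih =>
      rw [List.map_cons, FreeMonoid.ofList_cons, map_mul, Module.End.mul_apply, ih]
      cases hy : buildL l b with
      | none => simp [buildL, hy]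
      | some y =>
          have h2 : wHom R G (FreeMonoid.of (Gen.edge e)) = genE R G (Gen.edge e) := rfl
          simp only [Option.elim, h2, genE_edge, buildL, hy, Option.bind_some]
          by_cases h : G.rng e = y.vtx 0 <;> simp [h]

lemma wHom_ghosts (l : List G.Ed) : ∀ (b : BPt G) (r : R),
    wHom R G (FreeMonoid.ofList ((l.map Gen.ghost).reverse)) (Finsupp.single b r)
      = Option.elim (stripL l b) 0 (fun y => Finsupp.single y r) := by
  induction l with
  | nil => intro b r; simp [stripL]
  | cons e l ih =>
      intro b r
      rw [List.map_cons, List.reverse_cons, FreeMonoid.ofList_append, map_mul,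
        Module.End.mul_apply]
      have h1 : FreeMonoid.ofList [Gen.ghost e] = FreeMonoid.of (Gen.ghost e) := rfl
      have h2 : wHom R G (FreeMonoid.of (Gen.ghost e)) = genE R G (Gen.ghost e) := rfl
      rw [h1, h2, genE_ghost]
      by_cases hbe : b.ed 0 = some e
      · rw [if_pos hbe, ih]
        simp only [stripL, if_pos hbe]
      · rw [if_neg hbe, map_zero]
        simp only [stripL, if_neg hbe, Option.elim]

lemma wordStar_word (p : GPath G) :
    wordStar p.word
      = FreeMonoid.ofList ((p.edges.map Gen.ghost).reverse ++ [Gen.vert p.first]) := by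
  simp [wordStar, GPath.word, FreeMonoid.toList_ofList, List.map_map, List.map_cons,
    List.reverse_cons, Function.comp_def]

def Bact (p : GPath G) (b : BPt G) : Option (BPt G) :=
  (buildL p.edges b).bind fun y => if y.vtx 0 = p.first then some y else none

def Sact (p : GPath G) (b : BPt G) : Option (BPt G) :=
  if b.vtx 0 = p.first then stripL p.edges b else none

lemma repQ_path (p : GPath G) (b : BPt G) (r : R) :
    repQ R G (pathElem R p) (Finsupp.single b r)
      = Option.elim (Bact p b) 0 (fun y => Finsupp.single y r) := by
  rw [pathElem, repQ_mk, repA_single, one_smul,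
    show p.word = FreeMonoid.of (Gen.vert p.first)
        * FreeMonoid.ofList (p.edges.map Gen.edge) from rfl,
    map_mul, Module.End.mul_apply, wHom_edges]
  have h2 : wHom R G (FreeMonoid.of (Gen.vert p.first)) = genE R G (Gen.vert p.first) := rfl
  cases hy : buildL p.edges b with
  | none => simp [Bact, hy]
  | some y =>
      simp only [Option.elim, h2, genE_vert, Bact, hy, Option.bind_some]
      by_cases h : y.vtx 0 = p.first <;> simp [h]

lemma repQ_pathStar (p : GPath G) (b : BPt G) (r : R) :
    repQ R G (pathElemStar R p) (Finsupp.single b r)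
      = Option.elim (Sact p b) 0 (fun y => Finsupp.single y r) := by
  rw [pathElemStar, repQ_mk, repA_single, one_smul, wordStar_word,
    FreeMonoid.ofList_append, map_mul, Module.End.mul_apply]
  have h1 : FreeMonoid.ofList [Gen.vert p.first] = FreeMonoid.of (Gen.vert p.first) := rfl
  have h2 : wHom R G (FreeMonoid.of (Gen.vert p.first)) = genE R G (Gen.vert p.first) := rfl
  rw [h1, h2, genE_vert]
  by_cases hb : b.vtx 0 = p.first
  · rw [if_pos hb, wHom_ghosts]
    simp only [Sact, if_pos hb]
  · rw [if_neg hb, map_zero]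
    simp [Sact, hb]

lemma strip_build : ∀ (l : List G.Ed) (x y : BPt G), stripL l x = some y → buildL l y = some x := by
  intro l
  induction l with
  | nil => intro x y h; simp only [stripL] at h; cases h; rfl
  | cons e l ih =>
      intro x y h
      simp only [stripL] at h
      by_cases hbe : x.ed 0 = some e
      · rw [if_pos hbe] at h
        have hb := ih _ _ h
        have hv : G.rng e = x.shift.vtx 0 := (x.hrng 0 e hbe).symm
        simp only [buildL, hb, Option.bind_some, dif_pos hv]
        exact congrArg some (BPt.cons_shift x e hbe)
      · rw [if_neg hbe] at h; cases h

lemma stripL_append (l₁ l₂ : List G.Ed) : ∀ (x : BPt G),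
    stripL (l₁ ++ l₂) x = (stripL l₁ x).bind (stripL l₂) := by
  induction l₁ with
  | nil => intro x; simp [stripL]
  | cons e l ih =>
      intro x
      rw [List.cons_append]
      by_cases hbe : x.ed 0 = some e
      · simp only [stripL, if_pos hbe]
        exact ih x.shift
      · simp only [stripL, if_neg hbe]; rfl

lemma build_strip : ∀ (l : List G.Ed) (v : G.V) (x : BPt G), chainOK G v l →
    x.vtx 0 = pathEnd G v l →
    ∃ y, buildL l x = some y ∧ y.vtx 0 = v ∧ stripL l y = some x := by
  intro l
  induction l with
  | nil =>
      intro v x _ hv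
      exact ⟨x, rfl, hv, rfl⟩
  | cons e l ih =>
      intro v x hc hv
      obtain ⟨he, hc'⟩ := hc
      obtain ⟨y, hy, hyv, hys⟩ := ih (G.rng e) x hc' hv
      have hr : G.rng e = y.vtx 0 := hyv.symm
      refine ⟨BPt.cons e y hr, ?_, ?_, ?_⟩
      · simp only [buildL, hy, Option.bind_some, dif_pos hr]
      · rw [BPt.cons_vtx_zero]; exact he
      · simp only [stripL, BPt.cons_ed_zero, if_pos rfl, BPt.shift_cons]; exact hys

def ExtP (p : GPath G) (x : BPt G) : Prop :=
  x.vtx 0 = p.first ∧ (stripL p.edges x).isSome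

lemma repQ_proj (p : GPath G) (x : BPt G) :
    repQ R G (pathElem R p * pathElemStar R p) (Finsupp.single x (1:R))
      = if ExtP p x then Finsupp.single x (1:R) else 0 := by
  rw [map_mul, Module.End.mul_apply, repQ_pathStar]
  by_cases h1 : x.vtx 0 = p.first
  · simp only [Sact, if_pos h1]
    cases hs : stripL p.edges x with
    | none => simp [ExtP, h1, hs, Option.elim]
    | some y =>
        have hb : buildL p.edges y = some x := strip_build p.edges x y hs
        simp only [Option.elim, repQ_path, Bact, hb, Option.bind_some, if_pos h1]
        simp [ExtP, h1, hs]
  · simp [Sact, h1, ExtP]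

lemma exists_ext (q : GPath G) :
    ∃ x : BPt G, ExtP q x ∧
      ∀ p : GPath G, p.first = q.first → p.edges <+: q.edges → ExtP p x := by
  obtain ⟨y, _, hyv, hys⟩ := build_strip q.edges q.first (greedy (pathEnd G q.first q.edges))
    q.ok (greedy_vtx_zero _)
  refine ⟨y, ⟨hyv, by rw [hys]; rfl⟩, ?_⟩
  intro p hpf hpe
  obtain ⟨t, ht⟩ := hpe
  refine ⟨by rw [hyv, hpf], ?_⟩
  rw [← ht, stripL_append] at hys
  cases hz : stripL p.edges y with
  | none => rw [hz] at hys; cases hys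
  | some z => rfl

end Paths


section Alg

variable (R : Type) [CommRing R] (G : LGraph)

lemma relVV {v w : G.V} (h : v ≠ w) : vertexElem R G v * vertexElem R G w = 0 := by
  have := RingQuot.mkRingHom_rel (LRel.vert_vert h : LRel R G _ _)
  rw [map_mul, map_zero] at this
  exact this

lemma relVidem (v : G.V) : vertexElem R G v * vertexElem R G v = vertexElem R G v := by
  have := RingQuot.mkRingHom_rel (LRel.vert_idem v : LRel R G _ _)
  rw [map_mul] at this
  exact this

lemma relGE {e f : G.Ed} (h : e ≠ f) : ghostElem R G e * edgeElem R G f = 0 := by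
  have := RingQuot.mkRingHom_rel (LRel.ghost_edge h : LRel R G _ _)
  rw [map_mul, map_zero] at this
  exact this

lemma relGEself (e : G.Ed) :
    ghostElem R G e * edgeElem R G e = vertexElem R G (G.rng e) := by
  have := RingQuot.mkRingHom_rel (LRel.ghost_edge_self e : LRel R G _ _)
  rw [map_mul] at this
  exact this

lemma relSE (e : G.Ed) :
    vertexElem R G (G.src e) * edgeElem R G e = edgeElem R G e := by
  have := RingQuot.mkRingHom_rel (LRel.src_mul_edge e : LRel R G _ _)
  rw [map_mul] at this
  exact this

lemma relGV (e : G.Ed) :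
    ghostElem R G e * vertexElem R G (G.src e) = ghostElem R G e := by
  have := RingQuot.mkRingHom_rel (LRel.ghost_mul_src e : LRel R G _ _)
  rw [map_mul] at this
  exact this

def edP (l : List G.Ed) : LPA R G := (l.map (edgeElem R G)).prod

def ghRev (l : List G.Ed) : LPA R G := ((l.map (ghostElem R G)).reverse).prod

lemma edP_cons (e : G.Ed) (l : List G.Ed) :
    edP R G (e :: l) = edgeElem R G e * edP R G l := by
  simp [edP]

lemma ghRev_cons (e : G.Ed) (l : List G.Ed) :
    ghRev R G (e :: l) = ghRev R G l * ghostElem R G e := by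
  simp [ghRev]

lemma mk_ofList (L : List (Gen G)) :
    mk R G (MonoidAlgebra.single (FreeMonoid.ofList L) (1:R))
      = (L.map (fun g => mk R G (gn R g))).prod := by
  induction L with
  | nil =>
      have h1 : (MonoidAlgebra.single (FreeMonoid.ofList ([] : List (Gen G))) (1:R))
          = (1 : MA R G) := rfl
      rw [h1, map_one, List.map_nil, List.prod_nil]
  | cons g L ih =>
      have h1 : MonoidAlgebra.single (FreeMonoid.ofList (g :: L)) (1:R)
          = MonoidAlgebra.single (FreeMonoid.of g) (1:R)
            * MonoidAlgebra.single (FreeMonoid.ofList L) (1:R) := by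
        rw [MonoidAlgebra.single_mul_single, one_mul, FreeMonoid.ofList_cons]
      rw [h1, map_mul, ih, List.map_cons, List.prod_cons]
      rfl

lemma pathElem_eq (p : GPath G) :
    pathElem R p = vertexElem R G p.first * edP R G p.edges := by
  rw [pathElem,
    show p.word = FreeMonoid.ofList (Gen.vert p.first :: p.edges.map Gen.edge) from rfl,
    mk_ofList, List.map_cons, List.prod_cons]
  congr 1
  rw [edP, List.map_map]
  rfl

lemma pathElemStar_eq (p : GPath G) :
    pathElemStar R p = ghRev R G p.edges * vertexElem R G p.first := by
  rw [pathElemStar, wordStar_word, mk_ofList, List.map_append, List.prod_append]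
  congr 1
  · rw [ghRev, ← List.map_reverse, ← List.map_reverse, List.map_map]
    rfl
  · simp
    rfl

lemma assoc4 (a b c d : LPA R G) : (a * b) * (c * d) = a * (b * c) * d := by
  rw [mul_assoc, ← mul_assoc b c d, ← mul_assoc]

lemma ortho (l₁ : List G.Ed) : ∀ (v₁ : G.V) (l₂ : List G.Ed) (v₂ : G.V),
    chainOK G v₁ l₁ → chainOK G v₂ l₂ →
    (v₁ ≠ v₂ ∨ (¬ l₁ <+: l₂ ∧ ¬ l₂ <+: l₁)) →
    (ghRev R G l₁ * vertexElem R G v₁) * (vertexElem R G v₂ * edP R G l₂) = 0 := by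
  induction l₁ with
  | nil =>
      intro v₁ l₂ v₂ _ _ hinc
      rcases hinc with hne | ⟨h1, _⟩
      · rw [assoc4, relVV R G hne, mul_zero, zero_mul]
      · exact absurd (List.nil_prefix) h1
  | cons e l₁ ih =>
      intro v₁ l₂ v₂ hc₁ hc₂ hinc
      by_cases hv : v₁ = v₂
      · subst hv
        rcases hinc with hne | ⟨h1, h2⟩
        · exact absurd rfl hne
        cases l₂ with
        | nil => exact absurd (List.nil_prefix) h2
        | cons f l₂ =>
            obtain ⟨hse, hc₁'⟩ := hc₁
            obtain ⟨hsf, hc₂'⟩ := hc₂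
            rw [ghRev_cons, edP_cons]
            have s1 : vertexElem R G v₁ * (edgeElem R G f * edP R G l₂)
                = edgeElem R G f * edP R G l₂ := by
              rw [← mul_assoc, ← hsf, relSE]
            have s2 : ghRev R G l₁ * ghostElem R G e * vertexElem R G v₁
                = ghRev R G l₁ * ghostElem R G e := by
              rw [mul_assoc, ← hse, relGV]
            rw [s1, s2]
            by_cases hef : e = f
            · subst hef
              rw [assoc4, relGEself, ← relVidem,
                ← assoc4 R G (ghRev R G l₁) (vertexElem R G (G.rng e))
                  (vertexElem R G (G.rng e)) (edP R G l₂)]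
              exact ih (G.rng e) l₂ (G.rng e) hc₁' hc₂'
                (Or.inr ⟨fun hp => h1 (List.cons_prefix_cons.mpr ⟨rfl, hp⟩),
                  fun hp => h2 (List.cons_prefix_cons.mpr ⟨rfl, hp⟩)⟩)
            · rw [assoc4, relGE R G hef, mul_zero, zero_mul]
      · rw [assoc4, relVV R G hv, mul_zero, zero_mul]

end Alg

end Aux

open Leavitt in
/-- If paths `α₁, …, αₙ` in a finite graph satisfy `∑ αᵢαᵢ* = 1` in
`L_R(E)` for `R` a unital commutative ring of characteristic `0`, then `αᵢ*αⱼ = 0` for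
`i ≠ j`. -/
theorem orthogonal_of_sum_path_projections_eq_one
    (E : LGraph) [Fintype E.V] [Fintype E.Ed]
    (R : Type) [CommRing R] [CharZero R]
    (n : ℕ) (α : Fin n → GPath E)
    (h : (∑ i, pathElem R (α i) * pathElemStar R (α i)) = 1) :
    ∀ i j : Fin n, i ≠ j → pathElemStar R (α i) * pathElem R (α j) = 0 := by
  classical
  intro i j hij
  by_cases hcomp : (α i).first = (α j).first ∧
      ((α i).edges <+: (α j).edges ∨ (α j).edges <+: (α i).edges)
  · exfalso
    obtain ⟨hf, hpre⟩ := hcomp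
    have hx : ∃ x : BPt E, ExtP (α i) x ∧ ExtP (α j) x := by
      rcases hpre with hp | hp
      · obtain ⟨x, hxq, hext⟩ := exists_ext (α j)
        exact ⟨x, hext (α i) hf hp, hxq⟩
      · obtain ⟨x, hxq, hext⟩ := exists_ext (α i)
        exact ⟨x, hxq, hext (α j) hf.symm hp⟩
    obtain ⟨x, hxi, hxj⟩ := hx
    have h1 := congrArg (repQ R E) h
    rw [map_sum, map_one] at h1
    have h2 := congrArg (fun T : Module.End R (Mo R E) => T (Finsupp.single x (1:R))) h1
    simp only [LinearMap.sum_apply, Module.End.one_apply] at h2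
    rw [Finset.sum_congr rfl (fun k _ => repQ_proj R (α k) x)] at h2
    have h3 := congrArg (fun f : Mo R E => f x) h2
    rw [Finsupp.single_eq_same, Finset.sum_apply'] at h3
    have h4 : ∀ k : Fin n,
        (if ExtP (α k) x then Finsupp.single x (1:R) else 0) x
          = if ExtP (α k) x then (1:R) else 0 := by
      intro k; split <;> simp
    rw [Finset.sum_congr rfl (fun k _ => h4 k), Finset.sum_boole] at h3
    have h6 : (Finset.univ.filter fun k => ExtP (α k) x).card = 1 := by
      exact_mod_cast h3
    have hsub : ({i, j} : Finset (Fin n)) ⊆ Finset.univ.filter fun k => ExtP (α k) x := by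
      intro k hk
      simp only [Finset.mem_insert, Finset.mem_singleton] at hk
      rcases hk with rfl | rfl
      · simp [Finset.mem_filter, hxi]
      · simp [Finset.mem_filter, hxj]
    have hc := Finset.card_le_card hsub
    rw [Finset.card_pair hij, h6] at hc
    omega
  · have hdisj : (α i).first ≠ (α j).first ∨
        (¬ (α i).edges <+: (α j).edges ∧ ¬ (α j).edges <+: (α i).edges) := by
      by_cases hf : (α i).first = (α j).first
      · exact Or.inr ⟨fun hp => hcomp ⟨hf, Or.inl hp⟩, fun hp => hcomp ⟨hf, Or.inr hp⟩⟩
      · exact Or.inl hf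
    rw [pathElemStar_eq, pathElem_eq]
    exact ortho R E (α i).edges (α i).first (α j).edges (α j).first
      (α i).ok (α j).ok hdisj
end

section
/- Let E be a finite graph and let R be a subring of ℂ closed under complex conjugation. Suppose αᵢ, βᵢ ∈ E* with r(αᵢ) = r(βᵢ) and λᵢ ∈ R for i = 1, …, n satisfy: Σᵢ αᵢαᵢ* = 1, Σᵢ βᵢβᵢ* = 1, and λᵢλ̄ᵢ = 1 for all i. Then u = Σᵢ λᵢ αᵢβᵢ* is a unitary in L_R(E), i.e. u*u = uu* = 1. -/
open MulOpposite

noncomputable section Statement9Proof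
namespace Leavitt
open MonoidAlgebra

variable (R : Type) [CommRing R] (G : LGraph)

lemma mk_rel {a b : MA R G} (h : LRel R G a b) : mk R G a = mk R G b :=
  RingQuot.mkRingHom_rel h

lemma vv_ne {v w : G.V} (h : v ≠ w) :
    vertexElem R G v * vertexElem R G w = 0 := by
  simpa [vertexElem, map_mul] using mk_rel R G (LRel.vert_vert (R := R) (G := G) h)

lemma vv_idem (v : G.V) :
    vertexElem R G v * vertexElem R G v = vertexElem R G v := by
  simpa [vertexElem, map_mul] using mk_rel R G (LRel.vert_idem (R := R) (G := G) v)

lemma ge_ne {e f : G.Ed} (h : e ≠ f) :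
    ghostElem R G e * edgeElem R G f = 0 := by
  simpa [ghostElem, edgeElem, map_mul] using mk_rel R G (LRel.ghost_edge (R := R) (G := G) h)

lemma ge_self (e : G.Ed) :
    ghostElem R G e * edgeElem R G e = vertexElem R G (G.rng e) := by
  simpa [ghostElem, edgeElem, vertexElem, map_mul] using
    mk_rel R G (LRel.ghost_edge_self (R := R) (G := G) e)

lemma src_mul_edge (e : G.Ed) :
    vertexElem R G (G.src e) * edgeElem R G e = edgeElem R G e := by
  simpa [ghostElem, edgeElem, vertexElem, map_mul] using
    mk_rel R G (LRel.src_mul_edge (R := R) (G := G) e)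

lemma edge_mul_rng (e : G.Ed) :
    edgeElem R G e * vertexElem R G (G.rng e) = edgeElem R G e := by
  simpa [ghostElem, edgeElem, vertexElem, map_mul] using
    mk_rel R G (LRel.edge_mul_rng (R := R) (G := G) e)

lemma ghost_mul_src (e : G.Ed) :
    ghostElem R G e * vertexElem R G (G.src e) = ghostElem R G e := by
  simpa [ghostElem, edgeElem, vertexElem, map_mul] using
    mk_rel R G (LRel.ghost_mul_src (R := R) (G := G) e)

lemma rng_mul_ghost (e : G.Ed) :
    vertexElem R G (G.rng e) * ghostElem R G e = ghostElem R G e := by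
  simpa [ghostElem, edgeElem, vertexElem, map_mul] using
    mk_rel R G (LRel.rng_mul_ghost (R := R) (G := G) e)

/-- `mk` of a single word with coefficient 1. -/
def elL (L : List (Gen G)) : LPA R G :=
  mk R G (MonoidAlgebra.single (FreeMonoid.ofList L) 1)

lemma elL_nil : elL R G [] = 1 := by
  rw [elL, FreeMonoid.ofList_nil, ← MonoidAlgebra.one_def, map_one]

lemma elL_append (L1 L2 : List (Gen G)) :
    elL R G (L1 ++ L2) = elL R G L1 * elL R G L2 := by
  rw [elL, elL, elL, ← map_mul, MonoidAlgebra.single_mul_single, one_mul,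
    FreeMonoid.ofList_append]

lemma elL_cons (a : Gen G) (L : List (Gen G)) :
    elL R G (a :: L) = mk R G (gn R a) * elL R G L := by
  have : a :: L = [a] ++ L := rfl
  rw [this, elL_append]
  rfl

/-- The product of the edges of a list, as an element of the LPA. -/
def edgesEl (l : List G.Ed) : LPA R G := (l.map (edgeElem R G)).prod

/-- The product of ghost edges of the reversed list. -/
def ghostsRevEl (l : List G.Ed) : LPA R G := (l.reverse.map (ghostElem R G)).prod

@[simp] lemma edgesEl_nil : edgesEl R G [] = 1 := rfl
@[simp] lemma ghostsRevEl_nil : ghostsRevEl R G [] = 1 := rfl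

lemma edgesEl_cons (e : G.Ed) (l : List G.Ed) :
    edgesEl R G (e :: l) = edgeElem R G e * edgesEl R G l := by
  simp [edgesEl]

lemma ghostsRevEl_cons (e : G.Ed) (l : List G.Ed) :
    ghostsRevEl R G (e :: l) = ghostsRevEl R G l * ghostElem R G e := by
  simp [ghostsRevEl]

lemma elL_eq_prod (L : List (Gen G)) :
    elL R G L = (L.map (fun g => mk R G (gn R g))).prod := by
  induction L with
  | nil => simp [elL_nil]
  | cons a L ih => rw [elL_cons, ih]; simp

lemma pathElem_decomp (p : GPath G) :
    pathElem R p = vertexElem R G p.first * edgesEl R G p.edges := by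
  have h1 : pathElem R p = elL R G (Gen.vert p.first :: p.edges.map Gen.edge) := rfl
  rw [h1, elL_cons, elL_eq_prod]
  congr 1
  rw [edgesEl, List.map_map]
  rfl

lemma pathElemStar_decomp (p : GPath G) :
    pathElemStar R p = ghostsRevEl R G p.edges * vertexElem R G p.first := by
  have h1 : pathElemStar R p
      = elL R G ((p.edges.map Gen.ghost).reverse ++ [Gen.vert p.first]) := by
    have : wordStar (G := G) p.word
        = FreeMonoid.ofList ((p.edges.map Gen.ghost).reverse ++ [Gen.vert p.first]) := by
      rw [wordStar]
      congr 1
      show ((Gen.vert p.first :: p.edges.map Gen.edge).map starGen).reverse = _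
      simp [List.map_map]
    rw [pathElemStar, this]
    rfl
  rw [h1, elL_append, elL_eq_prod, elL_eq_prod]
  congr 1
  · rw [ghostsRevEl, ← List.map_reverse, List.map_map]
    rfl
  · simp [vertexElem]


lemma sandwich_eq (e : G.Ed) (x y : LPA R G) :
    x * ghostElem R G e * vertexElem R G (G.src e) * (edgeElem R G e * y)
      = x * (vertexElem R G (G.rng e) * y) := by
  rw [mul_assoc x (ghostElem R G e) (vertexElem R G (G.src e)), ghost_mul_src,
    mul_assoc x (ghostElem R G e) (edgeElem R G e * y),
    ← mul_assoc (ghostElem R G e) (edgeElem R G e) y, ge_self]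

lemma sandwich_ne {e f : G.Ed} (hef : e ≠ f) (x y : LPA R G) :
    x * ghostElem R G e * vertexElem R G (G.src e) * (edgeElem R G f * y) = 0 := by
  rw [mul_assoc x (ghostElem R G e) (vertexElem R G (G.src e)), ghost_mul_src,
    mul_assoc x (ghostElem R G e) (edgeElem R G f * y),
    ← mul_assoc (ghostElem R G e) (edgeElem R G f) y, ge_ne R G hef, zero_mul, mul_zero]

lemma core_zero (l1 : List G.Ed) : ∀ (l2 : List G.Ed) (v : G.V),
    chainOK G v l1 → chainOK G v l2 → ¬ l1 <+: l2 → ¬ l2 <+: l1 →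
    ghostsRevEl R G l1 * vertexElem R G v * edgesEl R G l2 = 0 := by
  induction l1 with
  | nil => intro l2 v _ _ h12 _; exact absurd List.nil_prefix h12
  | cons e t ih =>
    intro l2 v h1 h2 h12 h21
    cases l2 with
    | nil => exact absurd List.nil_prefix h21
    | cons f t2 =>
      obtain ⟨hse, ht⟩ := h1
      obtain ⟨hsf, ht2⟩ := h2
      subst hse
      rw [ghostsRevEl_cons, edgesEl_cons]
      by_cases hef : e = f
      · subst hef
        rw [sandwich_eq, ← mul_assoc]
        exact ih t2 (G.rng e) ht ht2
          (fun h => h12 (List.cons_prefix_cons.2 ⟨rfl, h⟩))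
          (fun h => h21 (List.cons_prefix_cons.2 ⟨rfl, h⟩))
      · exact sandwich_ne R G hef _ _

lemma core_vert (l : List G.Ed) : ∀ (v : G.V), chainOK G v l →
    ghostsRevEl R G l * vertexElem R G v * edgesEl R G l
      = vertexElem R G (pathEnd G v l) := by
  induction l with
  | nil => intro v _; simp [pathEnd]
  | cons e t ih =>
    intro v h
    obtain ⟨hse, ht⟩ := h
    subst hse
    rw [ghostsRevEl_cons, edgesEl_cons, sandwich_eq, ← mul_assoc]
    exact ih (G.rng e) ht

lemma edges_absorb (l : List G.Ed) : ∀ v, chainOK G v l → l ≠ [] →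
    edgesEl R G l * vertexElem R G (pathEnd G v l) = edgesEl R G l := by
  induction l with
  | nil => intro v _ h; exact absurd rfl h
  | cons e t ih =>
    intro v h _
    obtain ⟨hse, ht⟩ := h
    rw [edgesEl_cons]
    show edgeElem R G e * edgesEl R G t * vertexElem R G (pathEnd G (G.rng e) t)
      = edgeElem R G e * edgesEl R G t
    cases t with
    | nil =>
      show edgeElem R G e * 1 * vertexElem R G (G.rng e) = edgeElem R G e * 1
      rw [mul_one, edge_mul_rng]
    | cons f t' =>
      rw [mul_assoc, ih (G.rng e) ht (by simp)]

lemma pathElem_mul_vert_last (p : GPath G) :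
    pathElem R p * vertexElem R G p.last = pathElem R p := by
  rw [pathElem_decomp]
  by_cases h : p.edges = []
  · show vertexElem R G p.first * edgesEl R G p.edges
        * vertexElem R G (pathEnd G p.first p.edges) = _
    rw [h]
    show vertexElem R G p.first * 1 * vertexElem R G p.first = _
    rw [mul_one, vv_idem]
    show _ = vertexElem R G p.first * (1 : LPA R G)
    rw [mul_one]
  · show vertexElem R G p.first * edgesEl R G p.edges
        * vertexElem R G (pathEnd G p.first p.edges) = _
    rw [mul_assoc, edges_absorb R G p.edges p.first p.ok h]

/-- The prefix order on paths. -/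
def PathLe (p q : GPath G) : Prop := p.first = q.first ∧ p.edges <+: q.edges

lemma starMul_eq_zero (p q : GPath G) (h1 : ¬ PathLe G p q) (h2 : ¬ PathLe G q p) :
    pathElemStar R p * pathElem R q = 0 := by
  rw [pathElemStar_decomp, pathElem_decomp]
  by_cases hv : p.first = q.first
  · rw [hv, mul_assoc (ghostsRevEl R G p.edges) (vertexElem R G q.first)
      (vertexElem R G q.first * edgesEl R G q.edges),
      ← mul_assoc (vertexElem R G q.first) (vertexElem R G q.first)
      (edgesEl R G q.edges), vv_idem, ← mul_assoc]
    exact core_zero R G p.edges q.edges q.first (hv ▸ p.ok) q.ok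
      (fun h => h1 ⟨hv, h⟩) (fun h => h2 ⟨hv.symm, h⟩)
  · rw [mul_assoc (ghostsRevEl R G p.edges) (vertexElem R G p.first)
      (vertexElem R G q.first * edgesEl R G q.edges),
      ← mul_assoc (vertexElem R G p.first) (vertexElem R G q.first)
      (edgesEl R G q.edges), vv_ne R G hv, zero_mul, mul_zero]

lemma starMul_self (p : GPath G) :
    pathElemStar R p * pathElem R p = vertexElem R G p.last := by
  rw [pathElemStar_decomp, pathElem_decomp,
    mul_assoc (ghostsRevEl R G p.edges) (vertexElem R G p.first)
      (vertexElem R G p.first * edgesEl R G p.edges),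
    ← mul_assoc (vertexElem R G p.first) (vertexElem R G p.first)
      (edgesEl R G p.edges), vv_idem, ← mul_assoc]
  exact core_vert R G p.edges p.first p.ok


variable (σ : R →+* R)

lemma lstar_mk (a : MA R G) :
    lstar R G σ (mk R G a) = unop (starPre R G σ a) := by
  show unop ((RingQuot.lift ⟨starPre R G σ, starPre_rel R G σ⟩)
    (RingQuot.mkRingHom (LRel R G) a)) = _
  rw [RingQuot.lift_mkRingHom_apply]

lemma lstar_mul (a b : LPA R G) :
    lstar R G σ (a * b) = lstar R G σ b * lstar R G σ a := by
  show unop ((RingQuot.lift ⟨starPre R G σ, starPre_rel R G σ⟩) (a * b)) = _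
  rw [map_mul]
  rfl

lemma lstar_one : lstar R G σ 1 = 1 := by
  show unop ((RingQuot.lift ⟨starPre R G σ, starPre_rel R G σ⟩) 1) = _
  rw [map_one]
  rfl

lemma lstar_zero : lstar R G σ 0 = 0 := by
  show unop ((RingQuot.lift ⟨starPre R G σ, starPre_rel R G σ⟩) 0) = _
  rw [map_zero]
  rfl

lemma lstar_add (a b : LPA R G) :
    lstar R G σ (a + b) = lstar R G σ a + lstar R G σ b := by
  show unop ((RingQuot.lift ⟨starPre R G σ, starPre_rel R G σ⟩) (a + b)) = _
  rw [map_add]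
  rfl

lemma lstar_sum {ι : Type*} (s : Finset ι) (f : ι → LPA R G) :
    lstar R G σ (∑ i ∈ s, f i) = ∑ i ∈ s, lstar R G σ (f i) := by
  classical
  induction s using Finset.induction_on with
  | empty => simpa using lstar_zero R G σ
  | insert _ _ h ih =>
    rw [Finset.sum_insert h, Finset.sum_insert h, lstar_add, ih]

lemma mkAlgHom_eq_mk (x : MA R G) :
    RingQuot.mkAlgHom R (LRel R G) x = mk R G x := by
  rw [mk, ← RingQuot.mkAlgHom_coe R (LRel R G)]
  rfl

lemma algebraMap_eq_mk_single (d : R) :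
    algebraMap R (LPA R G) d = mk R G (MonoidAlgebra.single 1 d) := by
  rw [← (RingQuot.mkAlgHom R (LRel R G)).commutes d, mkAlgHom_eq_mk]
  congr 1

lemma lstar_algebraMap (c : R) :
    lstar R G σ (algebraMap R (LPA R G) c) = algebraMap R (LPA R G) (σ c) := by
  rw [algebraMap_eq_mk_single, lstar_mk, starPre_single, map_one (ghostMap R G), mul_one,
    MulOpposite.algebraMap_apply, unop_op]

lemma ghostMap_ofList (L : List (Gen G)) :
    ghostMap R G (FreeMonoid.ofList L) = op (elL R G ((L.map starGen).reverse)) := by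
  induction L with
  | nil =>
    rw [FreeMonoid.ofList_nil, map_one]
    simp [elL_nil]
  | cons a L ih =>
    rw [FreeMonoid.ofList_cons, map_mul, ih]
    have : ghostMap R G (FreeMonoid.of a) = op (mk R G (gn R (starGen a))) :=
      FreeMonoid.lift_eval_of _ _
    rw [this, ← op_mul]
    congr 1
    show elL R G ((L.map starGen).reverse) * mk R G (gn R (starGen a)) = _
    have h2 : ((a :: L).map starGen).reverse
        = (L.map starGen).reverse ++ [starGen a] := by simp
    rw [h2, elL_append]
    rfl

lemma lstar_elL (L : List (Gen G)) :
    lstar R G σ (elL R G L) = elL R G ((L.map starGen).reverse) := by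
  rw [elL, lstar_mk, starPre_single, map_one, map_one, one_mul, ghostMap_ofList]
  rfl

lemma pathElem_eq_elL (p : GPath G) :
    pathElem R p = elL R G (Gen.vert p.first :: p.edges.map Gen.edge) := rfl

lemma pathElemStar_eq_elL (p : GPath G) :
    pathElemStar R p
      = elL R G (((Gen.vert p.first :: p.edges.map Gen.edge).map starGen).reverse) := by
  rw [pathElemStar, wordStar]
  rfl

lemma lstar_pathElem (p : GPath G) :
    lstar R G σ (pathElem R p) = pathElemStar R p := by
  rw [pathElem_eq_elL, lstar_elL, pathElemStar_eq_elL]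

lemma lstar_pathElemStar (p : GPath G) :
    lstar R G σ (pathElemStar R p) = pathElem R p := by
  rw [pathElemStar_eq_elL, lstar_elL, pathElem_eq_elL]
  congr 1
  rw [← List.map_reverse, List.reverse_reverse, List.map_map]
  have : (starGen ∘ starGen : Gen G → Gen G) = id := by
    funext g; cases g <;> rfl
  rw [this, List.map_id]

lemma lstar_smul (c : R) (x : LPA R G) :
    lstar R G σ (c • x) = σ c • lstar R G σ x := by
  rw [Algebra.smul_def, lstar_mul, lstar_algebraMap, ← Algebra.commutes, ← Algebra.smul_def]


/-! ### The boundary-path representation -/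

/-- A boundary path of `G`: an infinite path, or a path that gets stuck at sinks. -/
structure BPath (G : LGraph) where
  vtx : ℕ → G.V
  ed : ℕ → Option G.Ed
  hsrc : ∀ n e, ed n = some e → G.src e = vtx n
  hrng : ∀ n e, ed n = some e → G.rng e = vtx (n + 1)
  hsink : ∀ n, ed n = none → IsSink G (vtx n)

lemma BPath.ext' {G : LGraph} {x y : BPath G}
    (h1 : x.vtx = y.vtx) (h2 : x.ed = y.ed) : x = y := by
  cases x; cases y; simp_all

def BPath.shift {G : LGraph} (x : BPath G) : BPath G where
  vtx n := x.vtx (n + 1)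
  ed n := x.ed (n + 1)
  hsrc n e h := x.hsrc _ e h
  hrng n e h := x.hrng _ e h
  hsink n h := x.hsink _ h

def BPath.cons {G : LGraph} (e : G.Ed) (x : BPath G) (h : G.rng e = x.vtx 0) : BPath G where
  vtx n := Nat.casesOn n (G.src e) x.vtx
  ed n := Nat.casesOn n (some e) x.ed
  hsrc := by
    intro n f hf
    cases n with
    | zero => cases hf; rfl
    | succ n => exact x.hsrc n f hf
  hrng := by
    intro n f hf
    cases n with
    | zero => cases hf; exact h
    | succ n => exact x.hrng n f hf
  hsink := by
    intro n hn
    cases n with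
    | zero => simp at hn
    | succ n => exact x.hsink n hn

lemma shift_cons {G : LGraph} (e : G.Ed) (x : BPath G) (h : G.rng e = x.vtx 0) :
    (BPath.cons e x h).shift = x :=
  BPath.ext' rfl rfl

lemma cons_shift {G : LGraph} (x : BPath G) (e : G.Ed) (he : x.ed 0 = some e)
    (h : G.rng e = x.shift.vtx 0) : BPath.cons e x.shift h = x := by
  apply BPath.ext'
  · funext n
    cases n with
    | zero => exact x.hsrc 0 e he
    | succ n => rfl
  · funext n
    cases n with
    | zero => exact he.symm
    | succ n => rfl

open scoped Classical

noncomputable def genFun (g : Gen G) (x : BPath G) : BPath G →₀ R :=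
  match g with
  | .vert v => if x.vtx 0 = v then Finsupp.single x 1 else 0
  | .edge e => if h : G.rng e = x.vtx 0 then Finsupp.single (BPath.cons e x h) 1 else 0
  | .ghost e => if x.ed 0 = some e then Finsupp.single x.shift 1 else 0

noncomputable def genAct (g : Gen G) : (BPath G →₀ R) →ₗ[R] (BPath G →₀ R) :=
  Finsupp.lsum R fun x => LinearMap.toSpanSingleton R _ (genFun R G g x)

lemma genAct_single (g : Gen G) (x : BPath G) :
    genAct R G g (Finsupp.single x 1) = genFun R G g x := by
  rw [genAct, Finsupp.lsum_single, LinearMap.toSpanSingleton_apply, one_smul]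

lemma act_vert (v : G.V) (x : BPath G) :
    genAct R G (.vert v) (Finsupp.single x 1)
      = if x.vtx 0 = v then Finsupp.single x 1 else 0 := by
  rw [genAct_single]; rfl

lemma act_edge (e : G.Ed) (x : BPath G) :
    genAct R G (.edge e) (Finsupp.single x 1)
      = if h : G.rng e = x.vtx 0 then Finsupp.single (BPath.cons e x h) 1 else 0 := by
  rw [genAct_single]; rfl

lemma act_ghost (e : G.Ed) (x : BPath G) :
    genAct R G (.ghost e) (Finsupp.single x 1)
      = if x.ed 0 = some e then Finsupp.single x.shift 1 else 0 := by
  rw [genAct_single]; rfl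

lemma end_ext {f g : Module.End R (BPath G →₀ R)}
    (h : ∀ x : BPath G, f (Finsupp.single x 1) = g (Finsupp.single x 1)) : f = g := by
  apply Finsupp.lhom_ext
  intro a b
  have hb : (Finsupp.single a b : BPath G →₀ R) = b • Finsupp.single a 1 := by
    rw [Finsupp.smul_single, smul_eq_mul, mul_one]
  rw [hb, map_smul, map_smul, h]

noncomputable def repW : Wd G →* Module.End R (BPath G →₀ R) :=
  FreeMonoid.lift (genAct R G)

noncomputable def repPhi : MA R G →ₐ[R] Module.End R (BPath G →₀ R) :=
  MonoidAlgebra.lift R _ (Wd G) (repW R G)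

lemma repPhi_gn (g : Gen G) : repPhi R G (gn R g) = genAct R G g := by
  rw [gn, repPhi, MonoidAlgebra.lift_single, one_smul]
  exact FreeMonoid.lift_eval_of _ _

lemma repPhi_rel : ∀ ⦃a b : MA R G⦄, LRel R G a b → repPhi R G a = repPhi R G b := by
  intro a b h
  cases h with
  | @vert_vert v w h =>
    simp only [map_mul, map_zero, repPhi_gn]
    apply end_ext
    intro x
    rw [Module.End.mul_apply, act_vert, LinearMap.zero_apply]
    by_cases h1 : x.vtx 0 = w
    · rw [if_pos h1, act_vert, if_neg (fun hh => h (hh.symm.trans h1))]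
    · rw [if_neg h1, map_zero]
  | vert_idem v =>
    simp only [map_mul, repPhi_gn]
    apply end_ext
    intro x
    rw [Module.End.mul_apply, act_vert]
    by_cases h1 : x.vtx 0 = v
    · rw [if_pos h1, act_vert, if_pos h1]
    · rw [if_neg h1, map_zero]
  | @ghost_edge e f h =>
    simp only [map_mul, map_zero, repPhi_gn]
    apply end_ext
    intro x
    rw [Module.End.mul_apply, act_edge, LinearMap.zero_apply]
    by_cases h1 : G.rng f = x.vtx 0
    · rw [dif_pos h1, act_ghost,
        if_neg (show ¬((BPath.cons f x h1).ed 0 = some e) from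
          fun hh => h (Option.some_injective _ hh).symm)]
    · rw [dif_neg h1, map_zero]
  | ghost_edge_self e =>
    simp only [map_mul, repPhi_gn]
    apply end_ext
    intro x
    rw [Module.End.mul_apply, act_edge, act_vert]
    by_cases h1 : G.rng e = x.vtx 0
    · rw [dif_pos h1, act_ghost,
        if_pos (show (BPath.cons e x h1).ed 0 = some e from rfl), shift_cons,
        if_pos h1.symm]
    · rw [dif_neg h1, map_zero, if_neg (fun hh => h1 hh.symm)]
  | src_mul_edge e =>
    simp only [map_mul, repPhi_gn]
    apply end_ext
    intro x
    rw [Module.End.mul_apply, act_edge]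
    by_cases h1 : G.rng e = x.vtx 0
    · rw [dif_pos h1, act_vert,
        if_pos (show (BPath.cons e x h1).vtx 0 = G.src e from rfl)]
    · rw [dif_neg h1, map_zero]
  | edge_mul_rng e =>
    simp only [map_mul, repPhi_gn]
    apply end_ext
    intro x
    rw [Module.End.mul_apply, act_vert]
    by_cases h1 : G.rng e = x.vtx 0
    · rw [if_pos h1.symm]
    · rw [if_neg (fun hh => h1 hh.symm), map_zero, act_edge, dif_neg h1]
  | ghost_mul_src e =>
    simp only [map_mul, repPhi_gn]
    apply end_ext
    intro x
    rw [Module.End.mul_apply, act_vert]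
    by_cases h1 : x.vtx 0 = G.src e
    · rw [if_pos h1]
    · rw [if_neg h1, map_zero, act_ghost,
        if_neg (fun hh => h1 (x.hsrc 0 e hh).symm)]
  | rng_mul_ghost e =>
    simp only [map_mul, repPhi_gn]
    apply end_ext
    intro x
    rw [Module.End.mul_apply, act_ghost]
    by_cases h1 : x.ed 0 = some e
    · rw [if_pos h1, act_vert,
        if_pos (show x.shift.vtx 0 = G.rng e from (x.hrng 0 e h1).symm)]
    · rw [if_neg h1, map_zero]
  | @ck v hfin hne =>
    simp only [map_mul, map_sum, repPhi_gn]
    apply end_ext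
    intro x
    rw [act_vert, LinearMap.sum_apply]
    have hterm2 : ∀ e ∈ hfin.toFinset,
        (genAct R G (.edge e) * genAct R G (.ghost e)) (Finsupp.single x (1:R))
          = if x.ed 0 = some e then Finsupp.single x 1 else 0 := by
      intro e _
      rw [Module.End.mul_apply, act_ghost]
      by_cases h1 : x.ed 0 = some e
      · have h2 : G.rng e = x.shift.vtx 0 := x.hrng 0 e h1
        rw [if_pos h1, act_edge, dif_pos h2, cons_shift x e h1 h2, if_pos h1]
      · rw [if_neg h1, map_zero, if_neg h1]
    rw [Finset.sum_congr rfl hterm2]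
    cases hx : x.ed 0 with
    | none =>
      rw [Finset.sum_eq_zero (fun (e : G.Ed) _ =>
        if_neg (show ¬((none : Option G.Ed) = some e) by simp))]
      rw [if_neg]
      intro hv
      obtain ⟨e0, he0⟩ := hne
      exact (x.hsink 0 hx) e0 (by rw [hv]; exact he0)
    | some e0 =>
      have hcong : ∀ e ∈ hfin.toFinset,
          (if (some e0 : Option G.Ed) = some e
            then (Finsupp.single x 1 : BPath G →₀ R) else 0)
            = if e0 = e then Finsupp.single x 1 else 0 := by
        intro e _
        by_cases hee : e0 = e
        · rw [if_pos (show (some e0 : Option G.Ed) = some e by rw [hee]), if_pos hee]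
        · rw [if_neg (show ¬((some e0 : Option G.Ed) = some e) from
            fun hh => hee (Option.some_injective _ hh)), if_neg hee]
      rw [Finset.sum_congr rfl hcong, Finset.sum_ite_eq]
      have hsrc0 : G.src e0 = x.vtx 0 := x.hsrc 0 e0 hx
      by_cases hm : x.vtx 0 = v
      · rw [if_pos (show e0 ∈ hfin.toFinset by
            rw [Set.Finite.mem_toFinset]; exact hsrc0.trans hm), if_pos hm]
      · rw [if_neg (show ¬(e0 ∈ hfin.toFinset) by
            rw [Set.Finite.mem_toFinset]; exact fun hh => hm (hsrc0.symm.trans hh)),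
          if_neg hm]
  | @unit hfin =>
    simp only [map_one, map_sum, repPhi_gn]
    apply end_ext
    intro x
    rw [Module.End.one_apply, LinearMap.sum_apply]
    have hterm2 : ∀ v ∈ hfin.toFinset,
        genAct R G (Gen.vert v) (Finsupp.single x (1:R))
          = if x.vtx 0 = v then Finsupp.single x 1 else 0 :=
      fun v _ => act_vert R G v x
    rw [Finset.sum_congr rfl hterm2, Finset.sum_ite_eq,
      if_pos (show x.vtx 0 ∈ hfin.toFinset by rw [Set.Finite.mem_toFinset]; trivial)]

noncomputable def rep : LPA R G →ₐ[R] Module.End R (BPath G →₀ R) :=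
  RingQuot.liftAlgHom R ⟨repPhi R G, repPhi_rel R G⟩

lemma rep_mk (a : MA R G) : rep R G (mk R G a) = repPhi R G a := by
  rw [← mkAlgHom_eq_mk, rep, RingQuot.liftAlgHom_mkAlgHom_apply]

lemma rep_vert (v : G.V) : rep R G (vertexElem R G v) = genAct R G (.vert v) := by
  rw [vertexElem, rep_mk, repPhi_gn]

lemma rep_edge (e : G.Ed) : rep R G (edgeElem R G e) = genAct R G (.edge e) := by
  rw [edgeElem, rep_mk, repPhi_gn]

lemma rep_ghost (e : G.Ed) : rep R G (ghostElem R G e) = genAct R G (.ghost e) := by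
  rw [ghostElem, rep_mk, repPhi_gn]

/-- `PfxE l x` : the list of edges `l` is an initial segment of the boundary path `x`. -/
def PfxE : List G.Ed → BPath G → Prop
  | [], _ => True
  | e :: t, x => x.ed 0 = some e ∧ PfxE t x.shift

lemma PfxE_cons (e : G.Ed) (t : List G.Ed) (x : BPath G) :
    PfxE G (e :: t) x ↔ x.ed 0 = some e ∧ PfxE G t x.shift := Iff.rfl

lemma rep_edges_ghost (l : List G.Ed) : ∀ x : BPath G,
    rep R G (edgesEl R G l * ghostsRevEl R G l) (Finsupp.single x 1)
      = if PfxE G l x then Finsupp.single x 1 else 0 := by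
  induction l with
  | nil =>
    intro x
    rw [edgesEl_nil, ghostsRevEl_nil, mul_one, map_one, Module.End.one_apply,
      if_pos (show PfxE G [] x from trivial)]
  | cons e t ih =>
    intro x
    have hre : edgesEl R G (e :: t) * ghostsRevEl R G (e :: t)
        = edgeElem R G e * ((edgesEl R G t * ghostsRevEl R G t) * ghostElem R G e) := by
      rw [edgesEl_cons, ghostsRevEl_cons]
      simp only [mul_assoc]
    rw [hre, map_mul, map_mul, Module.End.mul_apply, Module.End.mul_apply, rep_ghost,
      act_ghost, rep_edge]
    by_cases he : x.ed 0 = some e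
    · rw [if_pos he, ih x.shift]
      by_cases hp : PfxE G t x.shift
      · rw [if_pos hp, act_edge]
        have h2 : G.rng e = x.shift.vtx 0 := x.hrng 0 e he
        rw [dif_pos h2, cons_shift x e he h2, if_pos ((PfxE_cons G e t x).2 ⟨he, hp⟩)]
      · rw [if_neg hp, map_zero, if_neg (fun hc => hp ((PfxE_cons G e t x).1 hc).2)]
    · rw [if_neg he, map_zero, map_zero, if_neg (fun hc => he ((PfxE_cons G e t x).1 hc).1)]

/-- `Covers p x` : the finite path `p` is an initial segment of the boundary path `x`. -/
def Covers (p : GPath G) (x : BPath G) : Prop := x.vtx 0 = p.first ∧ PfxE G p.edges x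

lemma rep_proj_single (p : GPath G) (x : BPath G) :
    rep R G (pathElem R p * pathElemStar R p) (Finsupp.single x 1)
      = if Covers G p x then Finsupp.single x 1 else 0 := by
  have hdecomp : pathElem R p * pathElemStar R p
      = vertexElem R G p.first
        * ((edgesEl R G p.edges * ghostsRevEl R G p.edges) * vertexElem R G p.first) := by
    rw [pathElem_decomp, pathElemStar_decomp]
    simp only [mul_assoc]
  rw [hdecomp, map_mul, map_mul, Module.End.mul_apply, Module.End.mul_apply, rep_vert,
    act_vert]
  by_cases h1 : x.vtx 0 = p.first
  · rw [if_pos h1, rep_edges_ghost]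
    by_cases h2 : PfxE G p.edges x
    · rw [if_pos h2, act_vert, if_pos h1, if_pos (show Covers G p x from ⟨h1, h2⟩)]
    · rw [if_neg h2, map_zero, if_neg (show ¬ Covers G p x from fun hc => h2 hc.2)]
  · rw [if_neg h1, map_zero, map_zero,
      if_neg (show ¬ Covers G p x from fun hc => h1 hc.1)]

lemma cover_count {m : ℕ} (γ : Fin m → GPath G)
    (hsum : (∑ i, pathElem R (γ i) * pathElemStar R (γ i)) = 1) (x : BPath G) :
    (∑ i, if Covers G (γ i) x then (1 : R) else 0) = 1 := by
  have h1 := congrArg (rep R G) hsum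
  rw [map_sum, map_one] at h1
  have h2 := LinearMap.congr_fun h1 (Finsupp.single x (1 : R))
  rw [LinearMap.sum_apply, Module.End.one_apply] at h2
  have h4 : (∑ i, if Covers G (γ i) x then (Finsupp.single x 1 : BPath G →₀ R) else 0)
      = Finsupp.single x 1 :=
    (Finset.sum_congr rfl (fun i _ => (rep_proj_single R G (γ i) x).symm)).trans h2
  have h5 := congrArg (fun m : BPath G →₀ R => m x) h4
  simp only [Finset.sum_apply'] at h5
  have h6 : ∀ i : Fin m,
      ((if Covers G (γ i) x then (Finsupp.single x 1 : BPath G →₀ R) else 0) x)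
        = (if Covers G (γ i) x then (1 : R) else 0) := by
    intro i
    split_ifs
    · exact Finsupp.single_eq_same
    · rfl
  rw [Finset.sum_congr rfl (fun i _ => h6 i)] at h5
  rw [h5, Finsupp.single_eq_same]

noncomputable def nextE (v : G.V) : Option G.Ed :=
  if h : ∃ e, G.src e = v then some h.choose else none

def trajV (v : G.V) : ℕ → G.V
  | 0 => v
  | n + 1 =>
    match nextE G (trajV v n) with
    | some e => G.rng e
    | none => trajV v n

noncomputable def traj (v : G.V) : BPath G where
  vtx := trajV G v
  ed n := nextE G (trajV G v n)
  hsrc := by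
    intro n e h
    replace h : nextE G (trajV G v n) = some e := h
    unfold nextE at h
    split_ifs at h with hex
    cases h
    exact hex.choose_spec
  hrng := by
    intro n e h
    replace h : nextE G (trajV G v n) = some e := h
    have heq : trajV G v (n + 1)
        = match nextE G (trajV G v n) with
          | some e => G.rng e
          | none => trajV G v n := rfl
    rw [heq, h]
  hsink := by
    intro n h
    replace h : nextE G (trajV G v n) = none := h
    unfold nextE at h
    split_ifs at h with hex
    intro e he
    exact hex ⟨e, he⟩

lemma pfxE_exists (l : List G.Ed) : ∀ v, chainOK G v l →
    ∃ x : BPath G, x.vtx 0 = v ∧ PfxE G l x := by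
  induction l with
  | nil => intro v _; exact ⟨traj G v, rfl, trivial⟩
  | cons e t ih =>
    intro v h
    obtain ⟨hse, ht⟩ := h
    obtain ⟨x, hx0, hpfx⟩ := ih (G.rng e) ht
    refine ⟨BPath.cons e x hx0.symm, hse, ?_⟩
    refine (PfxE_cons G e t _).2 ⟨rfl, ?_⟩
    rw [shift_cons]
    exact hpfx

lemma pfxE_mono (l1 : List G.Ed) : ∀ (l2 : List G.Ed) (x : BPath G),
    l1 <+: l2 → PfxE G l2 x → PfxE G l1 x := by
  induction l1 with
  | nil => intro _ _ _ _; trivial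
  | cons e t ih =>
    intro l2 x hp h2
    cases l2 with
    | nil =>
      rw [List.prefix_nil] at hp
      cases hp
    | cons f t2 =>
      obtain ⟨hef, ht⟩ := List.cons_prefix_cons.1 hp
      subst hef
      obtain ⟨h0, hs⟩ := (PfxE_cons G e t2 x).1 h2
      exact (PfxE_cons G e t x).2 ⟨h0, ih t2 x.shift ht hs⟩

lemma covers_exists (p : GPath G) : ∃ x, Covers G p x := by
  obtain ⟨x, h1, h2⟩ := pfxE_exists G p.edges p.first p.ok
  exact ⟨x, h1, h2⟩

lemma covers_mono {p q : GPath G} (h : PathLe G p q) {x : BPath G}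
    (hc : Covers G q x) : Covers G p x :=
  ⟨hc.1.trans h.1.symm, pfxE_mono G p.edges q.edges x h.2 hc.2⟩

lemma not_pathLe_of_sum_one {m : ℕ} (γ : Fin m → GPath G)
    (hsum : (∑ i, pathElem R (γ i) * pathElemStar R (γ i)) = 1)
    (hchar : ∀ k : ℕ, ((k : ℕ) : R) = 1 → k = 1)
    {i j : Fin m} (hij : i ≠ j) : ¬ PathLe G (γ i) (γ j) := by
  intro hle
  obtain ⟨x, hx⟩ := covers_exists G (γ j)
  have hcount := cover_count R G γ hsum x
  rw [Finset.sum_boole] at hcount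
  have hcard : (Finset.univ.filter (fun k => Covers G (γ k) x)).card = 1 :=
    hchar _ hcount
  obtain ⟨k, hk⟩ := Finset.card_eq_one.1 hcard
  have hi : i ∈ Finset.univ.filter (fun k => Covers G (γ k) x) :=
    Finset.mem_filter.2 ⟨Finset.mem_univ i, covers_mono G hle hx⟩
  have hj : j ∈ Finset.univ.filter (fun k => Covers G (γ k) x) :=
    Finset.mem_filter.2 ⟨Finset.mem_univ j, hx⟩
  rw [hk, Finset.mem_singleton] at hi hj
  exact hij (hi.trans hj.symm)


lemma main_unitary {m : ℕ} (α β : Fin m → GPath G) (lam : Fin m → R)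
    (hrange : ∀ i, (α i).last = (β i).last)
    (hα : (∑ i, pathElem R (α i) * pathElemStar R (α i)) = 1)
    (hβ : (∑ i, pathElem R (β i) * pathElemStar R (β i)) = 1)
    (hchar : ∀ k : ℕ, ((k : ℕ) : R) = 1 → k = 1)
    (hunit : ∀ i, σ (lam i) * lam i = 1) (hunit' : ∀ i, lam i * σ (lam i) = 1) :
    IsUnitary R G σ (∑ i, lam i • (pathElem R (α i) * pathElemStar R (β i))) := by
  have hmid : ∀ w x y z : LPA R G, (w * x) * (y * z) = w * ((x * y) * z) := by
    intros; simp only [mul_assoc]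
  have hstar : lstar R G σ (∑ i, lam i • (pathElem R (α i) * pathElemStar R (β i)))
      = ∑ i, σ (lam i) • (pathElem R (β i) * pathElemStar R (α i)) := by
    rw [lstar_sum]
    refine Finset.sum_congr rfl fun i _ => ?_
    rw [lstar_smul, lstar_mul, lstar_pathElem, lstar_pathElemStar]
  constructor
  · rw [hstar, Finset.sum_mul_sum]
    have hterm : ∀ i j : Fin m,
        (σ (lam i) • (pathElem R (β i) * pathElemStar R (α i)))
          * (lam j • (pathElem R (α j) * pathElemStar R (β j)))
        = if i = j then pathElem R (β i) * pathElemStar R (β i) else 0 := by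
      intro i j
      rw [smul_mul_assoc, mul_smul_comm, smul_smul]
      by_cases hij : i = j
      · subst hij
        rw [if_pos rfl, hmid, starMul_self, hrange i, ← mul_assoc,
          pathElem_mul_vert_last, hunit i, one_smul]
      · rw [if_neg hij, hmid,
          starMul_eq_zero R G (α i) (α j)
            (not_pathLe_of_sum_one R G α hα hchar hij)
            (not_pathLe_of_sum_one R G α hα hchar (Ne.symm hij)),
          zero_mul, mul_zero, smul_zero]
    calc (∑ i, ∑ j, (σ (lam i) • (pathElem R (β i) * pathElemStar R (α i)))
          * (lam j • (pathElem R (α j) * pathElemStar R (β j))))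
        = ∑ i, ∑ j, if i = j then pathElem R (β i) * pathElemStar R (β i) else 0 :=
          Finset.sum_congr rfl fun i _ => Finset.sum_congr rfl fun j _ => hterm i j
      _ = ∑ i, pathElem R (β i) * pathElemStar R (β i) := by
          refine Finset.sum_congr rfl fun i _ => ?_
          rw [Finset.sum_ite_eq, if_pos (Finset.mem_univ i)]
      _ = 1 := hβ
  · rw [hstar, Finset.sum_mul_sum]
    have hterm : ∀ i j : Fin m,
        (lam i • (pathElem R (α i) * pathElemStar R (β i)))
          * (σ (lam j) • (pathElem R (β j) * pathElemStar R (α j)))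
        = if i = j then pathElem R (α i) * pathElemStar R (α i) else 0 := by
      intro i j
      rw [smul_mul_assoc, mul_smul_comm, smul_smul]
      by_cases hij : i = j
      · subst hij
        rw [if_pos rfl, hmid, starMul_self, ← hrange i, ← mul_assoc,
          pathElem_mul_vert_last, hunit' i, one_smul]
      · rw [if_neg hij, hmid,
          starMul_eq_zero R G (β i) (β j)
            (not_pathLe_of_sum_one R G β hβ hchar hij)
            (not_pathLe_of_sum_one R G β hβ hchar (Ne.symm hij)),
          zero_mul, mul_zero, smul_zero]
    calc (∑ i, ∑ j, (lam i • (pathElem R (α i) * pathElemStar R (β i)))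
          * (σ (lam j) • (pathElem R (β j) * pathElemStar R (α j))))
        = ∑ i, ∑ j, if i = j then pathElem R (α i) * pathElemStar R (α i) else 0 :=
          Finset.sum_congr rfl fun i _ => Finset.sum_congr rfl fun j _ => hterm i j
      _ = ∑ i, pathElem R (α i) * pathElemStar R (α i) := by
          refine Finset.sum_congr rfl fun i _ => ?_
          rw [Finset.sum_ite_eq, if_pos (Finset.mem_univ i)]
      _ = 1 := hα

end Leavitt
end Statement9Proof

open Leavitt in
/-- Sums `∑ λᵢ αᵢβᵢ*` with `∑ αᵢαᵢ* = 1 = ∑ βᵢβᵢ*`, `r(αᵢ) = r(βᵢ)` and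
`λᵢλ̄ᵢ = 1` are unitaries in `L_R(E)`. -/
theorem sum_lam_alpha_beta_star_is_unitary
    (E : LGraph) [Fintype E.V] [Fintype E.Ed]
    (R : Subring ℂ) (hR : ∀ z ∈ R, (starRingEnd ℂ) z ∈ R)
    (n : ℕ) (α β : Fin n → GPath E) (lam : Fin n → ↥R)
    (hrange : ∀ i, (α i).last = (β i).last)
    (hα : (∑ i, pathElem ↥R (α i) * pathElemStar ↥R (α i)) = 1)
    (hβ : (∑ i, pathElem ↥R (β i) * pathElemStar ↥R (β i)) = 1)
    (hlam : ∀ i, (lam i : ℂ) * (starRingEnd ℂ) (lam i : ℂ) = 1) :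
    IsUnitary ↥R E (conjHom R hR)
      (∑ i, lam i • (pathElem ↥R (α i) * pathElemStar ↥R (β i))) := by
  apply main_unitary ↥R E (conjHom R hR) α β lam hrange hα hβ
  · intro k hk
    have h1 := congrArg (Subtype.val) hk
    have h2 : ((k : ↥R) : ℂ) = (k : ℂ) := map_natCast R.subtype k
    rw [h2] at h1
    exact_mod_cast h1
  · intro i
    apply Subtype.ext
    show ((conjHom R hR) (lam i) : ℂ) * (lam i : ℂ) = 1
    rw [mul_comm]
    exact hlam i
  · intro i
    apply Subtype.ext
    exact hlam i
end

section
/- Let E be a graph, let R be a unital commutative subring of ℂ closed under complex conjugation that has an essentially unique partition of the unit, let x ∈ L_R(E) and λ ∈ R. If α, β ∈ E* are paths such that 2x = α + λβ in L_R(E), then α = β. -/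
open MulOpposite

noncomputable section Aux
namespace LeavittAux
open Leavitt

attribute [local instance] Classical.propDecidable

variable {G : LGraph}

theorem gpath_ext {p q : GPath G} (h1 : p.first = q.first) (h2 : p.edges = q.edges) :
    p = q := by
  cases p; cases q; cases h1; cases h2; rfl

lemma pathEnd_cons (e : G.Ed) (v : G.V) (l : List G.Ed) :
    pathEnd G v (e :: l) = pathEnd G (G.rng e) l := rfl

lemma chainOK_cons {e : G.Ed} {v : G.V} {l : List G.Ed} :
    chainOK G v (e :: l) ↔ G.src e = v ∧ chainOK G (G.rng e) l := Iff.rfl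

lemma pathEnd_append (v : G.V) (l₁ l₂ : List G.Ed) :
    pathEnd G v (l₁ ++ l₂) = pathEnd G (pathEnd G v l₁) l₂ := by
  induction l₁ generalizing v with
  | nil => rfl
  | cons e l ih => simpa [pathEnd_cons] using ih (G.rng e)

lemma chainOK_append {v : G.V} {l₁ l₂ : List G.Ed} :
    chainOK G v (l₁ ++ l₂) ↔ chainOK G v l₁ ∧ chainOK G (pathEnd G v l₁) l₂ := by
  induction l₁ generalizing v with
  | nil => simp [chainOK, pathEnd]
  | cons e l ih => simp [chainOK_cons, pathEnd_cons, ih, and_assoc]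

/-- The trivial path at a vertex. -/
def triv (v : G.V) : GPath G := ⟨v, [], trivial⟩

@[simp] lemma triv_first (v : G.V) : (triv v : GPath G).first = v := rfl
@[simp] lemma triv_edges (v : G.V) : (triv v : GPath G).edges = [] := rfl
@[simp] lemma triv_last (v : G.V) : (triv v : GPath G).last = v := rfl

lemma last_of_nil {p : GPath G} (h : p.edges = []) : p.last = p.first := by
  obtain ⟨v, l, hl⟩ := p
  cases h; rfl

/-- Prepend an edge to a path. -/
def cons (e : G.Ed) (p : GPath G) (h : G.rng e = p.first) : GPath G :=
  ⟨G.src e, e :: p.edges, ⟨rfl, by rw [h]; exact p.ok⟩⟩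

@[simp] lemma cons_first (e : G.Ed) (p : GPath G) (h) : (cons e p h).first = G.src e := rfl
@[simp] lemma cons_edges (e : G.Ed) (p : GPath G) (h) : (cons e p h).edges = e :: p.edges := rfl
@[simp] lemma cons_last (e : G.Ed) (p : GPath G) (h) : (cons e p h).last = p.last := by
  show pathEnd G (G.rng e) p.edges = pathEnd G p.first p.edges
  rw [h]

/-- Append an edge to a path. -/
def snoc (q : GPath G) (e : G.Ed) (h : q.last = G.src e) : GPath G :=
  ⟨q.first, q.edges ++ [e], chainOK_append.mpr ⟨q.ok, h.symm, trivial⟩⟩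

@[simp] lemma snoc_first (q : GPath G) (e : G.Ed) (h) : (snoc q e h).first = q.first := rfl
@[simp] lemma snoc_edges (q : GPath G) (e : G.Ed) (h) : (snoc q e h).edges = q.edges ++ [e] := rfl
@[simp] lemma snoc_last (q : GPath G) (e : G.Ed) (h) : (snoc q e h).last = G.rng e := by
  show pathEnd G q.first (q.edges ++ [e]) = G.rng e
  rw [pathEnd_append]; rfl

/-- The tail of a path (drops the first edge). -/
def tail : GPath G → GPath G
  | ⟨v, [], h⟩ => ⟨v, [], h⟩
  | ⟨_, e :: l, h⟩ => ⟨G.rng e, l, h.2⟩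

@[simp] lemma tail_last (p : GPath G) : (tail p).last = p.last := by
  obtain ⟨v, l, h⟩ := p; cases l <;> rfl

lemma tail_edges (p : GPath G) : (tail p).edges = p.edges.tail := by
  obtain ⟨v, l, h⟩ := p; cases l <;> rfl

lemma first_eq_of_head {p : GPath G} {e : G.Ed} (h : p.edges.head? = some e) :
    G.src e = p.first := by
  obtain ⟨v, l, hl⟩ := p
  cases l with
  | nil => simp at h
  | cons f l' =>
    simp only [List.head?_cons, Option.some.injEq] at h
    cases h; exact hl.1

lemma tail_first_of_head {p : GPath G} {e : G.Ed} (h : p.edges.head? = some e) :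
    (tail p).first = G.rng e := by
  obtain ⟨v, l, hl⟩ := p
  cases l with
  | nil => simp at h
  | cons f l' =>
    simp only [List.head?_cons, Option.some.injEq] at h
    cases h; rfl

lemma cons_tail {p : GPath G} {e : G.Ed} (h : p.edges.head? = some e) (hh) :
    cons e (tail p) hh = p := by
  obtain ⟨v, l, hl⟩ := p
  cases l with
  | nil => simp at h
  | cons f l' =>
    simp only [List.head?_cons, Option.some.injEq] at h
    cases h
    exact gpath_ext hl.1 (by simp [tail])

/-- A canonical choice of an edge out of each non-sink vertex. -/
def spec (v : G.V) : Option G.Ed :=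
  if h : ∃ e : G.Ed, G.src e = v then some h.choose else none

lemma spec_exists {v : G.V} {e : G.Ed} (h : G.src e = v) :
    ∃ f : G.Ed, spec v = some f ∧ G.src f = v := by
  have hx : ∃ e : G.Ed, G.src e = v := ⟨e, h⟩
  exact ⟨hx.choose, by rw [spec, dif_pos hx], hx.choose_spec⟩

/-- A pair `(p, q)` is bad when both end in the same chosen edge of a regular vertex. -/
def Bad (p q : GPath G) : Prop :=
  ∃ e : G.Ed, p.edges.getLast? = some e ∧ q.edges.getLast? = some e ∧
    {f : G.Ed | G.src f = G.src e}.Finite ∧ spec (G.src e) = some e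

lemma not_bad_left {p q : GPath G} (h : p.edges = []) : ¬ Bad p q := by
  rintro ⟨e, he, -⟩; rw [h] at he; simp at he

lemma not_bad_right {p q : GPath G} (h : q.edges = []) : ¬ Bad p q := by
  rintro ⟨e, -, he, -⟩; rw [h] at he; simp at he

lemma getLast?_tail {l : List G.Ed} {x : G.Ed} (h : l.tail.getLast? = some x) :
    l.getLast? = some x := by
  cases l with
  | nil => simp at h
  | cons a l' =>
    cases l' with
    | nil => simp at h
    | cons b l'' => rw [List.getLast?_cons_cons]; exact h

lemma bad_tail {p q : GPath G} (h : Bad (tail p) q) : Bad p q := by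
  obtain ⟨e, h1, h2, h3, h4⟩ := h
  exact ⟨e, getLast?_tail (by rwa [← tail_edges]), h2, h3, h4⟩

lemma of_bad_cons {e : G.Ed} {p q : GPath G} {hh : G.rng e = p.first}
    (hred : ¬ Bad p q) (h : Bad (cons e p hh) q) :
    p.edges = [] ∧ q.edges.getLast? = some e ∧
      {f : G.Ed | G.src f = G.src e}.Finite ∧ spec (G.src e) = some e := by
  obtain ⟨e', h1, h2, h3, h4⟩ := h
  rw [cons_edges] at h1
  cases hp : p.edges with
  | nil =>
    rw [hp] at h1
    simp only [List.getLast?_singleton, Option.some.injEq] at h1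
    cases h1
    exact ⟨rfl, h2, h3, h4⟩
  | cons f l' =>
    exfalso
    apply hred
    refine ⟨e', ?_, h2, h3, h4⟩
    rw [hp] at h1 ⊢
    rwa [List.getLast?_cons_cons] at h1

lemma chainOK_dropLast {v : G.V} {l : List G.Ed} (h : chainOK G v l) :
    chainOK G v l.dropLast := by
  induction l generalizing v with
  | nil => trivial
  | cons e l ih =>
    cases l with
    | nil => trivial
    | cons f l' =>
      rw [List.dropLast_cons₂]
      exact ⟨h.1, ih h.2⟩

/-- Remove the final edge of a path. -/
def dropLastP (q : GPath G) : GPath G :=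
  ⟨q.first, q.edges.dropLast, chainOK_dropLast q.ok⟩

@[simp] lemma dropLastP_first (q : GPath G) : (dropLastP q).first = q.first := rfl
@[simp] lemma dropLastP_edges (q : GPath G) : (dropLastP q).edges = q.edges.dropLast := rfl

lemma dropLastP_last {q : GPath G} {e : G.Ed} (h : q.edges.getLast? = some e) :
    (dropLastP q).last = G.src e := by
  have hd : q.edges.dropLast ++ [e] = q.edges := List.dropLast_append_getLast? e h
  have hok : chainOK G q.first (q.edges.dropLast ++ [e]) := by rw [hd]; exact q.ok
  have := (chainOK_append.mp hok).2
  exact ((chainOK_cons.mp this).1).symm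

lemma snoc_dropLastP {q : GPath G} {e : G.Ed} (h : q.edges.getLast? = some e) (hh) :
    snoc (dropLastP q) e hh = q :=
  gpath_ext rfl (by rw [snoc_edges, dropLastP_edges, List.dropLast_append_getLast? e h])

lemma dropLastP_snoc (q : GPath G) (e : G.Ed) (h) : dropLastP (snoc q e h) = q :=
  gpath_ext rfl (by rw [dropLastP_edges, snoc_edges, List.dropLast_concat])

end LeavittAux
end Aux

noncomputable section Aux2
namespace LeavittAux
open Leavitt

attribute [local instance] Classical.propDecidable

variable (R : Type) [CommRing R] {G : LGraph}

/-- Index of the basis of the representation: reduced pairs of paths with common range. -/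
def BIdx (G : LGraph) : Type :=
  {pq : GPath G × GPath G // pq.1.last = pq.2.last ∧ ¬ Bad pq.1 pq.2}

/-- The representation module: free module on the reduced pairs. -/
abbrev M (G : LGraph) : Type := BIdx G →₀ R

/-- Action of a vertex on a basis element. -/
def actV (v : G.V) (b : BIdx G) : M R G :=
  if b.1.1.first = v then Finsupp.single b 1 else 0

/-- Action of a ghost edge on a basis element. -/
def actG (e : G.Ed) (b : BIdx G) : M R G :=
  if hh : b.1.1.edges.head? = some e then
    Finsupp.single ⟨(tail b.1.1, b.1.2),
      (tail_last _).trans b.2.1, fun hb => b.2.2 (bad_tail hb)⟩ 1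
  else if hh2 : b.1.1.edges = [] ∧ G.src e = b.1.1.first then
    Finsupp.single ⟨(triv (G.rng e),
      snoc b.1.2 e (b.2.1.symm.trans ((last_of_nil hh2.1).trans hh2.2.symm))),
      by simp, not_bad_left rfl⟩ 1
  else 0

/-- The single-edge path. -/
def oneEdge (e : G.Ed) : GPath G := cons e (triv (G.rng e)) rfl

@[simp] lemma oneEdge_first (e : G.Ed) : (oneEdge e : GPath G).first = G.src e := rfl
@[simp] lemma oneEdge_edges (e : G.Ed) : (oneEdge e : GPath G).edges = [e] := rfl
@[simp] lemma oneEdge_last (e : G.Ed) : (oneEdge e : GPath G).last = G.rng e := by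
  show pathEnd G (G.rng e) [] = G.rng e; rfl

/-- Correction terms appearing when the CK relation is triggered. -/
def redAux (e : G.Ed) (q' : GPath G) (f : G.Ed) : M R G :=
  if hf : G.src f = G.src e ∧ f ≠ e ∧ q'.last = G.src e ∧ spec (G.src e) = some e then
    Finsupp.single ⟨(oneEdge f, snoc q' f (hf.2.2.1.trans hf.1.symm)),
      by simp, by
        rintro ⟨e', h1, h2, h3, h4⟩
        rw [oneEdge_edges] at h1
        simp only [List.getLast?_singleton, Option.some.injEq] at h1
        cases h1
        rw [hf.1, hf.2.2.2] at h4
        exact hf.2.1 (Option.some.inj h4).symm⟩ 1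
  else 0

/-- Action of an edge on a basis element. -/
def actE (e : G.Ed) (b : BIdx G) : M R G :=
  if h : G.rng e = b.1.1.first then
    if h3 : Bad (cons e b.1.1 h) b.1.2 then
      Finsupp.single ⟨(triv (G.src e), dropLastP b.1.2),
        by rw [triv_last, dropLastP_last (of_bad_cons b.2.2 h3).2.1],
        not_bad_left rfl⟩ 1
      - ∑ f ∈ (of_bad_cons b.2.2 h3).2.2.1.toFinset, redAux R e (dropLastP b.1.2) f
    else
      Finsupp.single ⟨(cons e b.1.1 h, b.1.2), by rw [cons_last]; exact b.2.1, h3⟩ 1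
  else 0

/-- The action of a generator on a basis element. -/
def act : Gen G → BIdx G → M R G
  | .vert v => actV R v
  | .edge e => actE R e
  | .ghost e => actG R e

/-- The endomorphism of the representation module given by a generator. -/
def endOf (g : Gen G) : Module.End R (M R G) :=
  Finsupp.linearCombination R (act R g)

lemma endOf_single (g : Gen G) (b : BIdx G) :
    endOf R g (Finsupp.single b 1) = act R g b := by
  rw [endOf, Finsupp.linearCombination_single, one_smul]

lemma mul_single (g₁ g₂ : Gen G) (b : BIdx G) :
    (endOf R g₁ * endOf R g₂) (Finsupp.single b 1) = endOf R g₁ (act R g₂ b) := by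
  rw [Module.End.mul_apply, endOf_single]

/-- The monoid homomorphism from words to endomorphisms. -/
def FM : Wd G →* Module.End R (M R G) := FreeMonoid.lift fun g => endOf R g

/-- The representation of the free algebra. -/
def rho : MA R G →ₐ[R] Module.End R (M R G) :=
  MonoidAlgebra.lift R (Module.End R (M R G)) (Wd G) (FM R)

lemma rho_gn (g : Gen G) : rho R (gn R g) = endOf R g := by
  rw [gn]
  unfold rho
  rw [MonoidAlgebra.lift_single, one_smul]
  rfl

lemma end_ext {f g : Module.End R (M R G)}
    (h : ∀ b : BIdx G, f (Finsupp.single b 1) = g (Finsupp.single b 1)) : f = g := by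
  apply Finsupp.lhom_ext
  intro b c
  have hc : (Finsupp.single b c : M R G) = c • Finsupp.single b 1 := by
    rw [Finsupp.smul_single, smul_eq_mul, mul_one]
  rw [hc, map_smul, map_smul, h]

lemma single_pair_eq {p q p' q' : GPath G} (hp : p = p') (hq : q = q') {h h'} :
    (Finsupp.single (⟨(p, q), h⟩ : BIdx G) (1 : R)) = Finsupp.single ⟨(p', q'), h'⟩ 1 := by
  subst hp; subst hq; rfl

end LeavittAux
end Aux2

noncomputable section Aux3
namespace LeavittAux
open Leavitt

attribute [local instance] Classical.propDecidable

variable (R : Type) [CommRing R] {G : LGraph}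

lemma actV_pos {v : G.V} {b : BIdx G} (h : b.1.1.first = v) :
    actV R v b = Finsupp.single b 1 := if_pos h

lemma actV_neg {v : G.V} {b : BIdx G} (h : ¬ b.1.1.first = v) :
    actV R v b = 0 := if_neg h

lemma actG_head {e : G.Ed} {b : BIdx G} (hh : b.1.1.edges.head? = some e) :
    actG R e b = Finsupp.single ⟨(tail b.1.1, b.1.2),
      (tail_last _).trans b.2.1, fun hb => b.2.2 (bad_tail hb)⟩ 1 := by
  unfold actG
  rw [dif_pos hh]

lemma actG_nil {e : G.Ed} {b : BIdx G} (h1 : b.1.1.edges = []) (h2 : G.src e = b.1.1.first) :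
    actG R e b = Finsupp.single ⟨(triv (G.rng e),
      snoc b.1.2 e (b.2.1.symm.trans ((last_of_nil h1).trans h2.symm))),
      by simp, not_bad_left rfl⟩ 1 := by
  unfold actG
  rw [dif_neg (by rw [h1]; simp), dif_pos ⟨h1, h2⟩]

lemma actG_zero {e : G.Ed} {b : BIdx G} (h1 : ¬ b.1.1.edges.head? = some e)
    (h2 : ¬ (b.1.1.edges = [] ∧ G.src e = b.1.1.first)) :
    actG R e b = 0 := by
  unfold actG
  rw [dif_neg h1, dif_neg h2]

lemma actE_neg {e : G.Ed} {b : BIdx G} (h : ¬ G.rng e = b.1.1.first) :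
    actE R e b = 0 := by
  unfold actE
  rw [dif_neg h]

lemma actE_good {e : G.Ed} {b : BIdx G} (h : G.rng e = b.1.1.first)
    (h3 : ¬ Bad (cons e b.1.1 h) b.1.2) :
    actE R e b = Finsupp.single ⟨(cons e b.1.1 h, b.1.2),
      by rw [cons_last]; exact b.2.1, h3⟩ 1 := by
  unfold actE
  rw [dif_pos h, dif_neg h3]

lemma actE_bad {e : G.Ed} {b : BIdx G} (h : G.rng e = b.1.1.first)
    (h3 : Bad (cons e b.1.1 h) b.1.2) :
    actE R e b = Finsupp.single ⟨(triv (G.src e), dropLastP b.1.2),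
        by rw [triv_last, dropLastP_last (of_bad_cons b.2.2 h3).2.1],
        not_bad_left rfl⟩ 1
      - ∑ f ∈ (of_bad_cons b.2.2 h3).2.2.1.toFinset, redAux R e (dropLastP b.1.2) f := by
  unfold actE
  rw [dif_pos h, dif_pos h3]

lemma redAux_pos {e f : G.Ed} {q' : GPath G}
    (hf : G.src f = G.src e ∧ f ≠ e ∧ q'.last = G.src e ∧ spec (G.src e) = some e) :
    redAux R e q' f = Finsupp.single ⟨(oneEdge f, snoc q' f (hf.2.2.1.trans hf.1.symm)),
      by simp, by
        rintro ⟨e', h1, h2, h3, h4⟩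
        rw [oneEdge_edges] at h1
        simp only [List.getLast?_singleton, Option.some.injEq] at h1
        cases h1
        rw [hf.1, hf.2.2.2] at h4
        exact hf.2.1 (Option.some.inj h4).symm⟩ 1 := by
  unfold redAux
  rw [dif_pos hf]

lemma redAux_neg {e f : G.Ed} {q' : GPath G}
    (hf : ¬ (G.src f = G.src e ∧ f ≠ e ∧ q'.last = G.src e ∧ spec (G.src e) = some e)) :
    redAux R e q' f = 0 := by
  unfold redAux
  rw [dif_neg hf]

lemma bidx_eq {b b' : BIdx G} (hp : b.1.1 = b'.1.1) (hq : b.1.2 = b'.1.2) : b = b' := by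
  apply Subtype.ext
  exact Prod.ext hp hq

lemma single_bidx_eq {b b' : BIdx G} (hp : b.1.1 = b'.1.1) (hq : b.1.2 = b'.1.2) :
    Finsupp.single b (1 : R) = Finsupp.single b' 1 := by
  rw [bidx_eq hp hq]

end LeavittAux
end Aux3

noncomputable section Aux4
namespace LeavittAux
open Leavitt

attribute [local instance] Classical.propDecidable

variable (R : Type) [CommRing R] {G : LGraph}

lemma endOf_vert_pos (v : G.V) (b : BIdx G) (h : b.1.1.first = v) :
    endOf R (.vert v) (Finsupp.single b (1 : R)) = Finsupp.single b 1 := by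
  rw [endOf_single]
  show actV R v b = _
  rw [actV_pos R h]

lemma endOf_vert_neg (v : G.V) (b : BIdx G) (h : ¬ b.1.1.first = v) :
    endOf R (.vert v) (Finsupp.single b (1 : R)) = 0 := by
  rw [endOf_single]
  show actV R v b = _
  rw [actV_neg R h]

lemma endOf_ghost_head (e : G.Ed) (b b' : BIdx G) (hh : b.1.1.edges.head? = some e)
    (hp1 : b'.1.1.first = G.rng e) (hp2 : b'.1.1.edges = b.1.1.edges.tail)
    (hq : b'.1.2 = b.1.2) :
    endOf R (.ghost e) (Finsupp.single b (1 : R)) = Finsupp.single b' 1 := by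
  rw [endOf_single]
  show actG R e b = _
  rw [actG_head R hh]
  apply single_bidx_eq
  · exact gpath_ext ((tail_first_of_head hh).trans hp1.symm) ((tail_edges _).trans hp2.symm)
  · exact hq.symm

lemma endOf_ghost_nil (e : G.Ed) (b b' : BIdx G) (h1 : b.1.1.edges = [])
    (h2 : G.src e = b.1.1.first) (hp : b'.1.1 = triv (G.rng e))
    (hqf : b'.1.2.first = b.1.2.first) (hqe : b'.1.2.edges = b.1.2.edges ++ [e]) :
    endOf R (.ghost e) (Finsupp.single b (1 : R)) = Finsupp.single b' 1 := by
  rw [endOf_single]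
  show actG R e b = _
  rw [actG_nil R h1 h2]
  apply single_bidx_eq
  · exact hp.symm
  · exact gpath_ext (by rw [snoc_first, hqf]) (by rw [snoc_edges, hqe])

lemma endOf_ghost_zero (e : G.Ed) (b : BIdx G) (hh1 : ¬ b.1.1.edges.head? = some e)
    (hh2 : ¬ (b.1.1.edges = [] ∧ G.src e = b.1.1.first)) :
    endOf R (.ghost e) (Finsupp.single b (1 : R)) = 0 := by
  rw [endOf_single]
  show actG R e b = _
  exact actG_zero R hh1 hh2

lemma endOf_edge_neg (e : G.Ed) (b : BIdx G) (h : ¬ G.rng e = b.1.1.first) :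
    endOf R (.edge e) (Finsupp.single b (1 : R)) = 0 := by
  rw [endOf_single]
  show actE R e b = _
  exact actE_neg R h

lemma endOf_edge_good (e : G.Ed) (b b' : BIdx G) (h : G.rng e = b.1.1.first)
    (h3 : ¬ Bad (cons e b.1.1 h) b.1.2) (hp1 : b'.1.1.first = G.src e)
    (hp2 : b'.1.1.edges = e :: b.1.1.edges) (hq : b'.1.2 = b.1.2) :
    endOf R (.edge e) (Finsupp.single b (1 : R)) = Finsupp.single b' 1 := by
  rw [endOf_single]
  show actE R e b = _
  rw [actE_good R h h3]
  apply single_bidx_eq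
  · exact gpath_ext (by rw [cons_first, hp1]) (by rw [cons_edges, hp2])
  · exact hq.symm

lemma endOf_edge_bad (e : G.Ed) (b b' : BIdx G) (h : G.rng e = b.1.1.first)
    (h0 : b.1.1.edges = []) (hfin : {f : G.Ed | G.src f = G.src e}.Finite)
    (hq : b.1.2.edges.getLast? = some e) (hsp : spec (G.src e) = some e)
    (hp : b'.1.1 = triv (G.src e)) (hq' : b'.1.2 = dropLastP b.1.2) :
    endOf R (.edge e) (Finsupp.single b (1 : R))
      = Finsupp.single b' 1 - ∑ f ∈ hfin.toFinset, redAux R e (dropLastP b.1.2) f := by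
  rw [endOf_single]
  show actE R e b = _
  have h3 : Bad (cons e b.1.1 h) b.1.2 :=
    ⟨e, by rw [cons_edges, h0]; simp, hq, hfin, hsp⟩
  rw [actE_bad R h h3]
  refine congrArg₂ Sub.sub ?_ rfl
  apply single_bidx_eq
  · exact hp.symm
  · exact hq'.symm

lemma redAux_eval (e : G.Ed) (q' : GPath G) (f : G.Ed) (b' : BIdx G)
    (h1 : G.src f = G.src e) (h2 : f ≠ e) (h3 : q'.last = G.src e)
    (h4 : spec (G.src e) = some e) (hp : b'.1.1 = oneEdge f)
    (hqf : b'.1.2.first = q'.first) (hqe : b'.1.2.edges = q'.edges ++ [f]) :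
    redAux R e q' f = Finsupp.single b' (1 : R) := by
  rw [redAux_pos R ⟨h1, h2, h3, h4⟩]
  apply single_bidx_eq
  · exact hp.symm
  · exact gpath_ext (by rw [snoc_first, hqf]) (by rw [snoc_edges, hqe])

end LeavittAux
end Aux4

noncomputable section Aux5
namespace LeavittAux
open Leavitt

attribute [local instance] Classical.propDecidable

variable (R : Type) [CommRing R] {G : LGraph}

lemma rel_vert_vert {v w : G.V} (h : v ≠ w) :
    (endOf R (.vert v) : Module.End R (M R G)) * endOf R (.vert w) = 0 := by
  apply end_ext
  intro b
  rw [mul_single, LinearMap.zero_apply]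
  show endOf R (.vert v) (actV R w b) = 0
  by_cases hb : b.1.1.first = w
  · rw [actV_pos R hb]
    exact endOf_vert_neg R v b (fun hv => h (hv.symm.trans hb))
  · rw [actV_neg R hb, map_zero]

lemma rel_vert_idem (v : G.V) :
    (endOf R (.vert v) : Module.End R (M R G)) * endOf R (.vert v) = endOf R (.vert v) := by
  apply end_ext
  intro b
  rw [mul_single, endOf_single]
  show endOf R (.vert v) (actV R v b) = actV R v b
  by_cases hb : b.1.1.first = v
  · rw [actV_pos R hb]
    exact endOf_vert_pos R v b hb
  · rw [actV_neg R hb, map_zero]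

lemma rel_src_mul_edge (e : G.Ed) :
    (endOf R (.vert (G.src e)) : Module.End R (M R G)) * endOf R (.edge e)
      = endOf R (.edge e) := by
  apply end_ext
  intro b
  rw [mul_single, endOf_single]
  show endOf R (.vert (G.src e)) (actE R e b) = actE R e b
  by_cases h : G.rng e = b.1.1.first
  · by_cases h3 : Bad (cons e b.1.1 h) b.1.2
    · rw [actE_bad R h h3, map_sub, map_sum]
      refine congrArg₂ Sub.sub ?_ (Finset.sum_congr rfl fun f hf => ?_)
      · exact endOf_vert_pos R _ _ rfl
      · by_cases hff : G.src f = G.src e ∧ f ≠ e ∧ (dropLastP b.1.2).last = G.src e ∧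
            spec (G.src e) = some e
        · rw [redAux_pos R hff]
          exact endOf_vert_pos R _ _ (show (oneEdge f : GPath G).first = G.src e by
            rw [oneEdge_first, hff.1])
        · rw [redAux_neg R hff, map_zero]
    · rw [actE_good R h h3]
      exact endOf_vert_pos R _ _ rfl
  · rw [actE_neg R h, map_zero]

lemma rel_edge_mul_rng (e : G.Ed) :
    (endOf R (.edge e) : Module.End R (M R G)) * endOf R (.vert (G.rng e))
      = endOf R (.edge e) := by
  apply end_ext
  intro b
  rw [mul_single, endOf_single]
  show endOf R (.edge e) (actV R (G.rng e) b) = actE R e b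
  by_cases hb : b.1.1.first = G.rng e
  · rw [actV_pos R hb, endOf_single]; rfl
  · rw [actV_neg R hb, map_zero, actE_neg R (fun hh => hb hh.symm)]

lemma rel_ghost_mul_src (e : G.Ed) :
    (endOf R (.ghost e) : Module.End R (M R G)) * endOf R (.vert (G.src e))
      = endOf R (.ghost e) := by
  apply end_ext
  intro b
  rw [mul_single, endOf_single]
  show endOf R (.ghost e) (actV R (G.src e) b) = actG R e b
  by_cases hb : b.1.1.first = G.src e
  · rw [actV_pos R hb, endOf_single]; rfl
  · rw [actV_neg R hb, map_zero,
      actG_zero R (fun hh => hb (first_eq_of_head hh).symm) (fun hc => hb hc.2.symm)]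

lemma rel_rng_mul_ghost (e : G.Ed) :
    (endOf R (.vert (G.rng e)) : Module.End R (M R G)) * endOf R (.ghost e)
      = endOf R (.ghost e) := by
  apply end_ext
  intro b
  rw [mul_single, endOf_single]
  show endOf R (.vert (G.rng e)) (actG R e b) = actG R e b
  by_cases hh : b.1.1.edges.head? = some e
  · rw [actG_head R hh]
    exact endOf_vert_pos R _ _ (tail_first_of_head hh)
  · by_cases hh2 : b.1.1.edges = [] ∧ G.src e = b.1.1.first
    · rw [actG_nil R hh2.1 hh2.2]
      exact endOf_vert_pos R _ _ rfl
    · rw [actG_zero R hh hh2, map_zero]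

lemma rel_ghost_edge {e f : G.Ed} (h : e ≠ f) :
    (endOf R (.ghost e) : Module.End R (M R G)) * endOf R (.edge f) = 0 := by
  apply end_ext
  intro b
  rw [mul_single, LinearMap.zero_apply]
  show endOf R (.ghost e) (actE R f b) = 0
  by_cases h1 : G.rng f = b.1.1.first
  · by_cases h3 : Bad (cons f b.1.1 h1) b.1.2
    · have hco := of_bad_cons b.2.2 h3
      rw [actE_bad R h1 h3, map_sub, map_sum]
      have hT1 : (dropLastP b.1.2).last = G.src f := dropLastP_last hco.2.1
      by_cases hsf : G.src e = G.src f
      · rw [sub_eq_zero]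
        have hsn : (dropLastP b.1.2).last = G.src e := hT1.trans hsf.symm
        have hlastT : (triv (G.rng e) : GPath G).last
            = (snoc (dropLastP b.1.2) e hsn).last := by
          rw [triv_last, snoc_last]
        set qS : GPath G := snoc (dropLastP b.1.2) e hsn with hqS
        set bT : BIdx G := ⟨(triv (G.rng e), qS), hlastT, not_bad_left rfl⟩ with hbT
        have hlastM : (oneEdge e : GPath G).last = qS.last := by
          rw [oneEdge_last, hqS, snoc_last]
        have hnbM : ¬ Bad (oneEdge e) qS := by
          rintro ⟨e', hA, hB, hC, hD⟩
          rw [oneEdge_edges] at hA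
          simp only [List.getLast?_singleton, Option.some.injEq] at hA
          cases hA
          rw [hsf, hco.2.2.2] at hD
          exact h (Option.some.inj hD).symm
        set bM : BIdx G := ⟨(oneEdge e, qS), hlastM, hnbM⟩ with hbM
        trans (Finsupp.single bT (1 : R))
        · refine endOf_ghost_nil R e _ bT ?_ ?_ ?_ ?_ ?_
          · rfl
          · exact hsf
          · rfl
          · rfl
          · rfl
        · symm
          have hmem : e ∈ hco.2.2.1.toFinset := hco.2.2.1.mem_toFinset.mpr hsf
          have hz : ∀ g ∈ hco.2.2.1.toFinset, g ≠ e →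
              endOf R (.ghost e) (redAux R f (dropLastP b.1.2) g) = 0 := by
            intro g hg hge
            by_cases hgg : G.src g = G.src f ∧ g ≠ f ∧ (dropLastP b.1.2).last = G.src f ∧
                spec (G.src f) = some f
            · rw [redAux_pos R hgg]
              refine endOf_ghost_zero R e _ ?_ ?_
              · show ¬ (oneEdge g : GPath G).edges.head? = some e
                rw [oneEdge_edges]
                simp only [List.head?_cons, Option.some.injEq]
                exact hge
              · show ¬ ((oneEdge g : GPath G).edges = [] ∧ _)
                rintro ⟨hc, -⟩
                rw [oneEdge_edges] at hc
                exact List.cons_ne_nil _ _ hc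
            · rw [redAux_neg R hgg, map_zero]
          rw [Finset.sum_eq_single_of_mem e hmem hz]
          rw [redAux_eval R f (dropLastP b.1.2) e bM hsf h hT1 hco.2.2.2 rfl rfl rfl]
          exact endOf_ghost_head R e bM bT rfl rfl rfl rfl
      · have hz0 : endOf R (.ghost e)
            (Finsupp.single (⟨(triv (G.src f), dropLastP b.1.2), by
              rw [triv_last, dropLastP_last hco.2.1], not_bad_left rfl⟩ : BIdx G) (1 : R)) = 0 := by
          refine endOf_ghost_zero R e _ ?_ ?_
          · show ¬ (triv (G.src f) : GPath G).edges.head? = some e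
            rw [triv_edges]; simp
          · rintro ⟨-, hc⟩
            rw [triv_first] at hc
            exact hsf hc
        rw [hz0, zero_sub, neg_eq_zero]
        apply Finset.sum_eq_zero
        intro g hg
        by_cases hgg : G.src g = G.src f ∧ g ≠ f ∧ (dropLastP b.1.2).last = G.src f ∧
            spec (G.src f) = some f
        · rw [redAux_pos R hgg]
          refine endOf_ghost_zero R e _ ?_ ?_
          · show ¬ (oneEdge g : GPath G).edges.head? = some e
            rw [oneEdge_edges]
            simp only [List.head?_cons, Option.some.injEq]
            intro hc
            exact hsf (by rw [← hc]; exact hgg.1)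
          · rintro ⟨hc, -⟩
            rw [oneEdge_edges] at hc
            exact List.cons_ne_nil _ _ hc
        · rw [redAux_neg R hgg, map_zero]
    · rw [actE_good R h1 h3]
      refine endOf_ghost_zero R e _ ?_ ?_
      · show ¬ (cons f b.1.1 h1).edges.head? = some e
        rw [cons_edges]
        simp only [List.head?_cons, Option.some.injEq]
        exact fun hc => h hc.symm
      · rintro ⟨hc, -⟩
        rw [cons_edges] at hc
        exact List.cons_ne_nil _ _ hc
  · rw [actE_neg R h1, map_zero]

lemma rel_ghost_edge_self (e : G.Ed) :
    (endOf R (.ghost e) : Module.End R (M R G)) * endOf R (.edge e)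
      = endOf R (.vert (G.rng e)) := by
  apply end_ext
  intro b
  rw [mul_single, endOf_single]
  show endOf R (.ghost e) (actE R e b) = actV R (G.rng e) b
  by_cases h1 : G.rng e = b.1.1.first
  · rw [actV_pos R h1.symm]
    by_cases h3 : Bad (cons e b.1.1 h1) b.1.2
    · have hco := of_bad_cons b.2.2 h3
      rw [actE_bad R h1 h3, map_sub, map_sum]
      have h1st : endOf R (.ghost e)
          (Finsupp.single (⟨(triv (G.src e), dropLastP b.1.2), by
            rw [triv_last, dropLastP_last hco.2.1], not_bad_left rfl⟩ : BIdx G) (1 : R))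
          = Finsupp.single b 1 := by
        refine endOf_ghost_nil R e _ b rfl rfl ?_ rfl ?_
        · exact gpath_ext (show b.1.1.first = (triv (G.rng e) : GPath G).first from h1.symm)
            (by rw [hco.1, triv_edges])
        · exact (List.dropLast_append_getLast? e hco.2.1).symm
      rw [h1st]
      have hz : ∀ g ∈ hco.2.2.1.toFinset,
          endOf R (.ghost e) (redAux R e (dropLastP b.1.2) g) = 0 := by
        intro g hg
        by_cases hgg : G.src g = G.src e ∧ g ≠ e ∧ (dropLastP b.1.2).last = G.src e ∧
            spec (G.src e) = some e
        · rw [redAux_pos R hgg]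
          refine endOf_ghost_zero R e _ ?_ ?_
          · show ¬ (oneEdge g : GPath G).edges.head? = some e
            rw [oneEdge_edges]
            simp only [List.head?_cons, Option.some.injEq]
            exact hgg.2.1
          · rintro ⟨hc, -⟩
            rw [oneEdge_edges] at hc
            exact List.cons_ne_nil _ _ hc
        · rw [redAux_neg R hgg, map_zero]
      rw [Finset.sum_eq_zero hz, sub_zero]
    · rw [actE_good R h1 h3]
      refine endOf_ghost_head R e _ b ?_ h1.symm ?_ rfl
      · show (cons e b.1.1 h1).edges.head? = some e
        rw [cons_edges]; rfl
      · show b.1.1.edges = (cons e b.1.1 h1).edges.tail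
        rw [cons_edges, List.tail_cons]
  · rw [actE_neg R h1, map_zero, actV_neg R (fun hb => h1 hb.symm)]

end LeavittAux
end Aux5

noncomputable section Aux6
namespace LeavittAux
open Leavitt

attribute [local instance] Classical.propDecidable

variable (R : Type) [CommRing R] {G : LGraph}

lemma act_vert (v : G.V) : act R (Gen.vert v : Gen G) = actV R v := rfl
lemma act_edge (e : G.Ed) : act R (Gen.edge e : Gen G) = actE R e := rfl
lemma act_ghost (e : G.Ed) : act R (Gen.ghost e : Gen G) = actG R e := rfl

lemma rel_ck (v : G.V) (hfin : {e : G.Ed | G.src e = v}.Finite)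
    (hne : {e : G.Ed | G.src e = v}.Nonempty) :
    (endOf R (.vert v) : Module.End R (M R G))
      = ∑ e ∈ hfin.toFinset, endOf R (.edge e) * endOf R (.ghost e) := by
  apply end_ext
  intro b
  rw [endOf_single, LinearMap.sum_apply]
  show actV R v b = _
  by_cases hb : b.1.1.first = v
  case neg =>
    rw [actV_neg R hb]
    symm
    apply Finset.sum_eq_zero
    intro e he
    have hsrc : G.src e = v := hfin.mem_toFinset.mp he
    rw [mul_single, act_ghost]
    rw [actG_zero R (fun hh => hb (by rw [← first_eq_of_head hh, hsrc]))
      (fun hc => hb (by rw [← hc.2, hsrc])), map_zero]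
  case pos =>
    rw [actV_pos R hb]
    rcases hp : b.1.1.edges with _ | ⟨e₀, l⟩
    case cons =>
      have hhd : b.1.1.edges.head? = some e₀ := by rw [hp]; rfl
      have he₀v : G.src e₀ = v := by rw [first_eq_of_head hhd, hb]
      have hmem : e₀ ∈ hfin.toFinset := hfin.mem_toFinset.mpr he₀v
      have hz : ∀ g ∈ hfin.toFinset, g ≠ e₀ →
          (endOf R (.edge g) * endOf R (.ghost g)) (Finsupp.single b 1) = 0 := by
        intro g hg hge
        rw [mul_single, act_ghost]
        have hc1 : ¬ b.1.1.edges.head? = some g := by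
          rw [hp]
          simp only [List.head?_cons, Option.some.injEq]
          exact fun hh => hge hh.symm
        have hc2 : ¬ (b.1.1.edges = [] ∧ G.src g = b.1.1.first) := by
          rintro ⟨hc, -⟩
          rw [hp] at hc
          exact List.cons_ne_nil _ _ hc
        rw [actG_zero R hc1 hc2, map_zero]
      symm
      rw [Finset.sum_eq_single_of_mem e₀ hmem hz, mul_single, act_ghost, actG_head R hhd]
      refine endOf_edge_good R e₀ _ b (tail_first_of_head hhd).symm ?_ ?_ ?_ rfl
      · intro hbad
        exact b.2.2 (by rwa [cons_tail hhd] at hbad)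
      · exact hb.trans he₀v.symm
      · show b.1.1.edges = e₀ :: (tail b.1.1).edges
        rw [tail_edges, hp, List.tail_cons]
    case nil =>
      obtain ⟨ew, hew⟩ := hne
      obtain ⟨e1, hspec, hse1⟩ := spec_exists hew
      have hmem : e1 ∈ hfin.toFinset := hfin.mem_toFinset.mpr hse1
      have hql : b.1.2.last = v := by rw [← b.2.1, last_of_nil hp, hb]
      -- the correction-term function vanishes at e1
      have hz0 : redAux R e1 b.1.2 e1 = 0 :=
        redAux_neg R (by rintro ⟨-, hc, -⟩; exact hc rfl)
      -- each non-chosen term equals the correction term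
      have hstep : ∀ f ∈ hfin.toFinset.erase e1,
          (endOf R (.edge f) * endOf R (.ghost f)) (Finsupp.single b 1)
            = redAux R e1 b.1.2 f := by
        intro f hf
        have hfe : f ≠ e1 := (Finset.mem_erase.mp hf).1
        have hsf : G.src f = v := hfin.mem_toFinset.mp (Finset.mem_erase.mp hf).2
        have hsn : b.1.2.last = G.src f := hql.trans hsf.symm
        have hlst : (oneEdge f : GPath G).last = (snoc b.1.2 f hsn).last := by
          rw [oneEdge_last, snoc_last]
        have hnb : ¬ Bad (oneEdge f) (snoc b.1.2 f hsn) := by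
          rintro ⟨e', hA, hB, hC, hD⟩
          rw [oneEdge_edges] at hA
          simp only [List.getLast?_singleton, Option.some.injEq] at hA
          cases hA
          rw [hsf, hspec] at hD
          exact hfe (Option.some.inj hD).symm
        set bF : BIdx G := ⟨(oneEdge f, snoc b.1.2 f hsn), hlst, hnb⟩ with hbF
        rw [mul_single, act_ghost, actG_nil R hp (hsf.trans hb.symm)]
        rw [redAux_eval R e1 b.1.2 f bF (hsf.trans hse1.symm) hfe (hql.trans hse1.symm)
          (by rw [hse1]; exact hspec) rfl rfl rfl]
        refine endOf_edge_good R f _ bF rfl ?_ rfl rfl rfl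
        exact hnb
      -- the chosen term gives the main term minus all corrections
      have hfin' : {g : G.Ed | G.src g = G.src e1}.Finite := by rw [hse1]; exact hfin
      have hfs : hfin'.toFinset = hfin.toFinset := by
        ext g
        rw [Set.Finite.mem_toFinset, Set.Finite.mem_toFinset]
        show G.src g = G.src e1 ↔ G.src g = v
        rw [hse1]
      have hsne1 : b.1.2.last = G.src e1 := hql.trans hse1.symm
      have hlst2 : (triv (G.rng e1) : GPath G).last = (snoc b.1.2 e1 hsne1).last := by
        rw [triv_last, snoc_last]
      have hnb2 : ¬ Bad (triv (G.rng e1)) (snoc b.1.2 e1 hsne1) := not_bad_left rfl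
      have hTe : (endOf R (.edge e1) * endOf R (.ghost e1)) (Finsupp.single b 1)
          = Finsupp.single b 1 - ∑ f ∈ hfin.toFinset.erase e1, redAux R e1 b.1.2 f := by
        rw [Module.End.mul_apply]
        rw [endOf_ghost_nil R e1 b
          (⟨(triv (G.rng e1), snoc b.1.2 e1 hsne1), hlst2, hnb2⟩ : BIdx G)
          hp (hse1.trans hb.symm) rfl rfl rfl]
        have hqlast : (b.1.2.edges ++ [e1]).getLast? = some e1 := by
          rw [List.getLast?_append_of_ne_nil _ (by simp : ([e1] : List G.Ed) ≠ [])]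
          rfl
        have hbeq : b.1.1 = triv (G.src e1) :=
          gpath_ext (hb.trans hse1.symm) (by rw [hp, triv_edges])
        have hdrop : b.1.2 = dropLastP (snoc b.1.2 e1 hsne1) :=
          (dropLastP_snoc b.1.2 e1 hsne1).symm
        rw [endOf_edge_bad R e1
          (⟨(triv (G.rng e1), snoc b.1.2 e1 hsne1), hlst2, hnb2⟩ : BIdx G) b
          rfl rfl hfin' hqlast (by rw [hse1]; exact hspec) hbeq hdrop]
        rw [hfs, ← hdrop]
        congr 1
        exact (Finset.sum_erase _ hz0).symm
      symm
      rw [← Finset.add_sum_erase _ _ hmem, hTe, Finset.sum_congr rfl hstep]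
      abel

lemma rel_unit (hV : (Set.univ : Set G.V).Finite) :
    (1 : Module.End R (M R G)) = ∑ v ∈ hV.toFinset, endOf R (.vert v) := by
  apply end_ext
  intro b
  rw [Module.End.one_apply, LinearMap.sum_apply]
  symm
  have hmem : b.1.1.first ∈ hV.toFinset := hV.mem_toFinset.mpr trivial
  have hz : ∀ w ∈ hV.toFinset, w ≠ b.1.1.first →
      endOf R (.vert w) (Finsupp.single b 1) = 0 := by
    intro w hw hne
    exact endOf_vert_neg R w b (fun hc => hne hc.symm)
  rw [Finset.sum_eq_single_of_mem _ hmem hz]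
  exact endOf_vert_pos R _ b rfl

lemma rho_rel : ∀ ⦃x y : MA R G⦄, LRel R G x y → rho R x = rho R y := by
  intro x y h
  cases h with
  | vert_vert h =>
    simp only [map_mul, rho_gn, map_zero]; exact rel_vert_vert R h
  | vert_idem v =>
    simp only [map_mul, rho_gn]; exact rel_vert_idem R v
  | ghost_edge h =>
    simp only [map_mul, rho_gn, map_zero]; exact rel_ghost_edge R h
  | ghost_edge_self e =>
    simp only [map_mul, rho_gn]; exact rel_ghost_edge_self R e
  | src_mul_edge e =>
    simp only [map_mul, rho_gn]; exact rel_src_mul_edge R e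
  | edge_mul_rng e =>
    simp only [map_mul, rho_gn]; exact rel_edge_mul_rng R e
  | ghost_mul_src e =>
    simp only [map_mul, rho_gn]; exact rel_ghost_mul_src R e
  | rng_mul_ghost e =>
    simp only [map_mul, rho_gn]; exact rel_rng_mul_ghost R e
  | ck v hfin hne =>
    rw [map_sum]
    simp only [map_mul, rho_gn]
    exact rel_ck R v hfin hne
  | unit hV =>
    rw [map_one, map_sum]
    simp only [rho_gn]
    exact rel_unit R hV

end LeavittAux
end Aux6

noncomputable section Aux7
namespace LeavittAux
open Leavitt

attribute [local instance] Classical.propDecidable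

variable (R : Type) [CommRing R] {G : LGraph}

/-- The representation of the Leavitt path algebra. -/
def rhoHat : LPA R G →ₐ[R] Module.End R (M R G) :=
  RingQuot.liftAlgHom R ⟨rho R, rho_rel R⟩

lemma rhoHat_mk (x : MA R G) : rhoHat R (mk R G x) = rho R x := by
  have hcoe : mk R G x = RingQuot.mkAlgHom R (LRel R G) x := by
    rw [mk, ← RingQuot.mkAlgHom_coe R (LRel R G)]
    rfl
  rw [hcoe]
  exact RingQuot.liftAlgHom_mkAlgHom_apply _ _ _ _

/-- The basis element given by a pair of trivial paths at a vertex. -/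
def trivB (v : G.V) : BIdx G := ⟨(triv v, triv v), rfl, not_bad_left rfl⟩

lemma FM_edges : ∀ (l : List G.Ed) (u : G.V), chainOK G u l → ∀ v : G.V,
    pathEnd G u l = v → ∀ b' : BIdx G, b'.1.1.first = u → b'.1.1.edges = l →
    b'.1.2 = triv v →
    FM R (FreeMonoid.ofList (l.map Gen.edge)) (Finsupp.single (trivB v) (1 : R))
      = Finsupp.single b' 1 := by
  intro l
  induction l with
  | nil =>
    intro u ok v hv b' hp1 hp2 hq
    rw [List.map_nil, FreeMonoid.ofList_nil, map_one, Module.End.one_apply]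
    refine single_bidx_eq R ?_ ?_
    · refine gpath_ext ?_ ?_
      · show v = b'.1.1.first
        rw [hp1]
        exact hv.symm
      · show ([] : List G.Ed) = b'.1.1.edges
        rw [hp2]
    · show (triv v : GPath G) = b'.1.2
      rw [hq]
  | cons e l ih =>
    intro u ok v hv b' hp1 hp2 hq
    rw [List.map_cons, FreeMonoid.ofList_cons, map_mul, Module.End.mul_apply]
    have hv' : pathEnd G (G.rng e) l = v := hv
    have hlmid : (⟨G.rng e, l, ok.2⟩ : GPath G).last = (triv v : GPath G).last := by
      rw [triv_last]; exact hv'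
    rw [ih (G.rng e) ok.2 v hv'
      ⟨(⟨G.rng e, l, ok.2⟩, triv v), hlmid, not_bad_right rfl⟩ rfl rfl rfl]
    show endOf R (.edge e) _ = _
    refine endOf_edge_good R e _ b' rfl (not_bad_right rfl) ?_ ?_ ?_
    · rw [hp1, ← ok.1]
    · rw [hp2]
    · rw [hq]

lemma FM_edges_zero : ∀ (l : List G.Ed) (u : G.V), chainOK G u l → ∀ v : G.V,
    l ≠ [] → pathEnd G u l ≠ v →
    FM R (FreeMonoid.ofList (l.map Gen.edge)) (Finsupp.single (trivB v) (1 : R)) = 0 := by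
  intro l
  induction l with
  | nil => intro u ok v hne hv; exact absurd rfl hne
  | cons e l ih =>
    intro u ok v hne hv
    rw [List.map_cons, FreeMonoid.ofList_cons, map_mul, Module.End.mul_apply]
    cases l with
    | nil =>
      rw [List.map_nil, FreeMonoid.ofList_nil, map_one, Module.End.one_apply]
      show endOf R (.edge e) _ = _
      exact endOf_edge_neg R e _ (fun hc => hv hc)
    | cons f l' =>
      rw [ih (G.rng e) ok.2 v (List.cons_ne_nil f l') hv, map_zero]

lemma rhoHat_path (c : GPath G) (v : G.V) (hv : c.last = v) (b' : BIdx G)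
    (hp : b'.1.1 = c) (hq : b'.1.2 = triv v) :
    rhoHat R (pathElem R c) (Finsupp.single (trivB v) (1 : R)) = Finsupp.single b' 1 := by
  rw [pathElem, rhoHat_mk]
  unfold rho
  rw [MonoidAlgebra.lift_single, one_smul]
  show FM R (FreeMonoid.ofList (Gen.vert c.first :: c.edges.map Gen.edge)) _ = _
  rw [FreeMonoid.ofList_cons, map_mul, Module.End.mul_apply]
  rw [FM_edges R c.edges c.first c.ok v hv b' (by rw [hp]) (by rw [hp]) hq]
  show endOf R (.vert c.first) _ = _
  exact endOf_vert_pos R _ _ (by rw [hp])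

lemma rhoHat_path_zero (c : GPath G) (v : G.V) (hv : c.last ≠ v) :
    rhoHat R (pathElem R c) (Finsupp.single (trivB v) (1 : R)) = 0 := by
  rw [pathElem, rhoHat_mk]
  unfold rho
  rw [MonoidAlgebra.lift_single, one_smul]
  show FM R (FreeMonoid.ofList (Gen.vert c.first :: c.edges.map Gen.edge)) _ = _
  rw [FreeMonoid.ofList_cons, map_mul, Module.End.mul_apply]
  rcases hl : c.edges with _ | ⟨e, l⟩
  · rw [List.map_nil, FreeMonoid.ofList_nil, map_one, Module.End.one_apply]
    show endOf R (.vert c.first) _ = _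
    exact endOf_vert_neg R _ _ (fun hc => hv ((last_of_nil hl).trans hc.symm))
  · have hok : chainOK G c.first (e :: l) := hl ▸ c.ok
    have hv' : pathEnd G c.first (e :: l) ≠ v := by
      intro hc
      apply hv
      show pathEnd G c.first c.edges = v
      rw [hl]; exact hc
    rw [FM_edges_zero R (e :: l) c.first hok v (List.cons_ne_nil e l) hv', map_zero]

end LeavittAux
end Aux7

noncomputable section Aux8
namespace LeavittAux
open Leavitt

attribute [local instance] Classical.propDecidable

variable (R : Type) [CommRing R] {G : LGraph}

/-- Core algebraic fact: if `2x = α + λβ` with `α ≠ β` then `R` contains one half. -/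
lemma exists_half (x : LPA R G) (lam : R) (a b : GPath G) (hab : a ≠ b)
    (h : 2 * x = pathElem R a + lam • pathElem R b) : ∃ c : R, c + c = 1 := by
  set v : G.V := a.last with hv
  set δ : M R G := Finsupp.single (trivB v) (1 : R) with hδ
  have h' : 2 * x = pathElem R a + algebraMap R (LPA R G) lam * pathElem R b := by
    rw [h, Algebra.smul_def]
  have H2 := congrArg (rhoHat R) h'
  rw [map_mul, map_add, map_mul, AlgHom.commutes, map_ofNat] at H2
  set b1 : BIdx G := ⟨(a, triv v), by rw [triv_last], not_bad_right rfl⟩ with hb1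
  have hA : rhoHat R (pathElem R a) δ = Finsupp.single b1 1 :=
    rhoHat_path R a v rfl b1 rfl rfl
  refine ⟨(rhoHat R x δ) b1, ?_⟩
  have e1 := congrArg (fun T : Module.End R (M R G) => (T δ) b1) H2
  simp only [two_mul, LinearMap.add_apply, Module.End.mul_apply,
    Module.algebraMap_end_apply, Finsupp.add_apply, Finsupp.smul_apply, smul_eq_mul,
    hA, Finsupp.single_eq_same] at e1
  by_cases hbl : b.last = v
  · set b2 : BIdx G := ⟨(b, triv v), by rw [triv_last]; exact hbl,
      not_bad_right rfl⟩ with hb2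
    rw [rhoHat_path R b v hbl b2 rfl rfl] at e1
    have hne : b2 ≠ b1 := by
      intro hcon
      exact hab (congrArg (fun t => t.1.1) hcon).symm
    rw [Finsupp.single_eq_of_ne' hne, mul_zero, add_zero] at e1
    exact e1
  · rw [rhoHat_path_zero R b v hbl] at e1
    simpa using e1

end LeavittAux
end Aux8

open Leavitt in
/-- If `2x = α + λβ` in `L_R(E)` for paths `α, β` and `λ ∈ R`, where
`R ⊆ ℂ` is closed under conjugation and has an essentially unique partition of the unit,
then `α = β`. -/
theorem path_eq_of_two_mul_eq_add
    (E : LGraph) (R : Subring ℂ) (hR : ∀ z ∈ R, (starRingEnd ℂ) z ∈ R)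
    (hEUP : HasEUP R) (x : LPA ↥R E) (lam : ↥R) (a b : GPath E)
    (h : 2 * x = pathElem ↥R a + lam • pathElem ↥R b) : a = b := by
  classical
  by_contra hab
  obtain ⟨c, hkey⟩ := LeavittAux.exists_half ↥R x lam a b hab h
  have hcc : (c : ℂ) = 1 / 2 := by
    have h2 : (c : ℂ) + (c : ℂ) = 1 := by
      exact_mod_cast congrArg (fun t : ↥R => (t : ℂ)) hkey
    linear_combination h2 / 2
  have hconj : (starRingEnd ℂ) ((1 : ℂ) / 2) = 1 / 2 := by
    rw [map_div₀, map_one, map_ofNat]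
  obtain ⟨j, hj⟩ := hEUP 4 (fun _ => c) (by
    rw [Finset.sum_const, Finset.card_univ, Fintype.card_fin, hcc, hconj]
    norm_num)
  have hex : ∃ i : Fin 4, i ≠ j := by
    rcases eq_or_ne j 0 with h0 | h0
    · exact ⟨1, by rw [h0]; decide⟩
    · exact ⟨0, Ne.symm h0⟩
  obtain ⟨i, hi⟩ := hex
  have hc0 : c = 0 := hj i hi
  rw [hc0] at hcc
  norm_num at hcc
end
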